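/- arXiv:0905.3508 — 13 statements merged into one kernel-verified Lean document; each statement's English description precedes it below -/
import Mathlib

section
/- For any double posets E, F, G, the number of pictures from the composition EF to G equals the sum, over all decompositions (I,S) of G, of the product of the number of pictures from E to I and the number of pictures from F to S. Equivalently, there is a bijection between pictures α: EF → G and 4-tuples (φ, ψ, I, S) where (I,S) is a decomposition of G, φ is a picture from E to I, and ψ is a picture from F to S. -/
def compRel1 {E F : Type} (rE : E → E → Prop) (rF : F → F → Prop) :
    E ⊕ F → E ⊕ F → Prop
  | Sum.inl a, Sum.inl b => rE a b
  | Sum.inr a, Sum.inr b => rF a b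
  | _, _ => False

/-- Second order of the composition `EF`: all of `E` below all of `F`. -/
def compRel2 {E F : Type} (rE : E → E → Prop) (rF : F → F → Prop) :
    E ⊕ F → E ⊕ F → Prop
  | Sum.inl a, Sum.inl b => rE a b
  | Sum.inr a, Sum.inr b => rF a b
  | Sum.inl _, Sum.inr _ => True
  | Sum.inr _, Sum.inl _ => False

/-- A picture between double posets. -/
def IsPicture {E F : Type} (rE1 rE2 : E → E → Prop) (rF1 rF2 : F → F → Prop)
    (φ : E ≃ F) : Prop :=
  (∀ e e', rE1 e e' → rF2 (φ e) (φ e')) ∧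
  (∀ f f', rF1 f f' → rE2 (φ.symm f) (φ.symm f'))

/-- Restriction of a relation to a subset. -/
def resRel {α : Type} (r : α → α → Prop) (s : Set α) : s → s → Prop :=
  fun a b => r a b

open Sum Classical

/-- Glue pictures on an ideal and its complement into a single bijection. -/
noncomputable def glue {E F G : Type} (I : Set G) (φ : E ≃ ↥I) (ψ : F ≃ ↥(Iᶜ)) :
    (E ⊕ F) ≃ G where
  toFun := Sum.elim (fun e => (φ e : G)) (fun f => (ψ f : G))
  invFun g := if h : g ∈ I then Sum.inl (φ.symm ⟨g, h⟩) else Sum.inr (ψ.symm ⟨g, h⟩)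
  left_inv x := by
    cases x with
    | inl e => simp [(φ e).2]
    | inr f => have h : (ψ f : G) ∉ I := (ψ f).2; simp [h]
  right_inv g := by
    by_cases h : g ∈ I <;> simp [h]

theorem glue_symm_apply {E F G : Type} (I : Set G) (φ : E ≃ ↥I) (ψ : F ≃ ↥(Iᶜ)) (g : G) :
    (glue I φ ψ).symm g =
      if h : g ∈ I then Sum.inl (φ.symm ⟨g, h⟩) else Sum.inr (ψ.symm ⟨g, h⟩) := rfl

/-- The ideal associated to a picture from a composition. -/
def idealOf {E F G : Type} (α : (E ⊕ F) ≃ G) : Set G := {g | (α.symm g).isLeft = true}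

theorem mem_idealOf_iff {E F G : Type} (α : (E ⊕ F) ≃ G) (g : G) :
    g ∈ idealOf α ↔ ∃ e, α (Sum.inl e) = g := by
  constructor
  · intro h
    obtain ⟨e, he⟩ := Sum.isLeft_iff.mp h
    exact ⟨e, by rw [← he]; simp⟩
  · rintro ⟨e, rfl⟩
    simp [idealOf]

theorem not_mem_idealOf_isRight {E F G : Type} (α : (E ⊕ F) ≃ G) (g : G) :
    g ∉ idealOf α ↔ (α.symm g).isRight = true := by
  cases h : α.symm g <;> simp [idealOf, h]

theorem not_mem_idealOf_iff {E F G : Type} (α : (E ⊕ F) ≃ G) (g : G) :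
    g ∉ idealOf α ↔ ∃ f, α (Sum.inr f) = g := by
  constructor
  · intro h
    obtain ⟨f, hf⟩ := Sum.isRight_iff.mp ((not_mem_idealOf_isRight α g).mp h)
    exact ⟨f, by rw [← hf]; simp⟩
  · rintro ⟨f, rfl⟩
    rw [not_mem_idealOf_isRight]
    simp



theorem sigma_ext_helper {E F G : Type}
    (rE1 rE2 : E → E → Prop) (rF1 rF2 : F → F → Prop) (rG1 rG2 : G → G → Prop)
    (x y : Σ I : {I : Set G // ∀ x y, y ∈ I → rG1 x y → x ∈ I},
      {φ : E ≃ ↥I.1 // IsPicture rE1 rE2 (resRel rG1 I.1) (resRel rG2 I.1) φ} ×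
      {ψ : F ≃ ↥(I.1ᶜ) // IsPicture rF1 rF2 (resRel rG1 I.1ᶜ) (resRel rG2 I.1ᶜ) ψ})
    (h : x.1.1 = y.1.1)
    (hφ : ∀ e, (x.2.1.1 e : G) = (y.2.1.1 e : G))
    (hψ : ∀ f, (x.2.2.1 f : G) = (y.2.2.1 f : G)) : x = y := by
  obtain ⟨⟨I1, hI1⟩, ⟨φ1, hφ1⟩, ⟨ψ1, hψ1⟩⟩ := x
  obtain ⟨⟨I2, hI2⟩, ⟨φ2, hφ2⟩, ⟨ψ2, hψ2⟩⟩ := y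
  simp only at h hφ hψ
  subst h
  have e1 : φ1 = φ2 := Equiv.ext fun e => Subtype.ext (hφ e)
  have e2 : ψ1 = ψ2 := Equiv.ext fun f => Subtype.ext (hψ f)
  subst e1; subst e2
  rfl

/-- Pictures from the composition `EF` to `G` are in bijection with 4-tuples
`(φ, ψ, I, S)` where `(I, S)` is a decomposition of `G`, `φ` a picture from `E`
to `I` and `ψ` a picture from `F` to `S = Iᶜ`. -/
theorem pictures_from_composition
    {E F G : Type} [Fintype E] [Fintype F] [Fintype G]
    (rE1 rE2 : E → E → Prop) (rF1 rF2 : F → F → Prop) (rG1 rG2 : G → G → Prop)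
    (hE1 : IsStrictOrder E rE1) (hE2 : IsStrictOrder E rE2)
    (hF1 : IsStrictOrder F rF1) (hF2 : IsStrictOrder F rF2)
    (hG1 : IsStrictOrder G rG1) (hG2 : IsStrictOrder G rG2) :
    Nonempty
      ({α : (E ⊕ F) ≃ G //
          IsPicture (compRel1 rE1 rF1) (compRel2 rE2 rF2) rG1 rG2 α} ≃
        Σ I : {I : Set G // ∀ x y, y ∈ I → rG1 x y → x ∈ I},
          {φ : E ≃ ↥I.1 //
              IsPicture rE1 rE2 (resRel rG1 I.1) (resRel rG2 I.1) φ} ×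
          {ψ : F ≃ ↥(I.1ᶜ) //
              IsPicture rF1 rF2 (resRel rG1 I.1ᶜ) (resRel rG2 I.1ᶜ) ψ}) := by
  constructor
  -- forward map
  refine Equiv.mk (fun p => ?_) (fun q => ?_) ?_ ?_
  · obtain ⟨α, hα⟩ := p
    -- the ideal
    refine ⟨⟨idealOf α, ?_⟩, ?_, ?_⟩
    · intro x y hy hxy
      obtain ⟨e, he⟩ := (mem_idealOf_iff α y).mp hy
      have h2 := hα.2 x y hxy
      by_contra hx
      obtain ⟨f, hf⟩ := (not_mem_idealOf_iff α x).mp hx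
      rw [← he, ← hf] at h2
      simp [compRel2] at h2
    · -- picture from E to I
      refine ⟨⟨fun e => ⟨α (Sum.inl e), (mem_idealOf_iff α _).mpr ⟨e, rfl⟩⟩,
        fun g => (α.symm g.1).getLeft g.2, fun e => by simp, fun g => ?_⟩, ?_, ?_⟩
      · obtain ⟨g, hg⟩ := g
        obtain ⟨e, he⟩ := Sum.isLeft_iff.mp hg
        refine Subtype.ext ?_
        simp only [he, Sum.getLeft_inl]
        rw [← he]; simp
      · intro e e' h
        exact hα.1 (Sum.inl e) (Sum.inl e') h
      · intro g g' h
        have h2 := hα.2 g.1 g'.1 h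
        obtain ⟨e, he⟩ := Sum.isLeft_iff.mp g.2
        obtain ⟨e', he'⟩ := Sum.isLeft_iff.mp g'.2
        simp only [Equiv.coe_fn_symm_mk, he, he', Sum.getLeft_inl]
        rwa [he, he'] at h2
    · -- picture from F to Iᶜ
      refine ⟨⟨fun f => ⟨α (Sum.inr f), (not_mem_idealOf_iff α _).mpr ⟨f, rfl⟩⟩,
        fun g => (α.symm g.1).getRight ?_, fun f => by simp, fun g => ?_⟩, ?_, ?_⟩
      · exact (not_mem_idealOf_isRight α g.1).mp g.2
      · obtain ⟨g, hg⟩ := g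
        have hg' : (α.symm g).isRight := (not_mem_idealOf_isRight α g).mp hg
        obtain ⟨f, hf⟩ := Sum.isRight_iff.mp hg'
        refine Subtype.ext ?_
        simp only [hf, Sum.getRight_inr]
        rw [← hf]; simp
      · intro f f' h
        exact hα.1 (Sum.inr f) (Sum.inr f') h
      · intro g g' h
        have h2 := hα.2 g.1 g'.1 h
        have hg' : (α.symm g.1).isRight := (not_mem_idealOf_isRight α g.1).mp g.2
        have hg'' : (α.symm g'.1).isRight := (not_mem_idealOf_isRight α g'.1).mp g'.2
        obtain ⟨f, hf⟩ := Sum.isRight_iff.mp hg'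
        obtain ⟨f', hf'⟩ := Sum.isRight_iff.mp hg''
        simp only [Equiv.coe_fn_symm_mk, hf, hf', Sum.getRight_inr]
        rwa [hf, hf'] at h2
  -- backward map
  · obtain ⟨⟨I, hI⟩, ⟨φ, hφ⟩, ⟨ψ, hψ⟩⟩ := q
    refine ⟨glue I φ ψ, ?_, ?_⟩
    · intro x x' h
      match x, x' with
      | Sum.inl e, Sum.inl e' => exact hφ.1 e e' h
      | Sum.inr f, Sum.inr f' => exact hψ.1 f f' h
      | Sum.inl e, Sum.inr f => exact absurd h id
      | Sum.inr f, Sum.inl e => exact absurd h id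
    · intro g g' h
      rw [glue_symm_apply, glue_symm_apply]
      by_cases hg : g ∈ I <;> by_cases hg' : g' ∈ I
      · simp only [hg, hg', dif_pos]
        exact hφ.2 ⟨g, hg⟩ ⟨g', hg'⟩ h
      · simp only [hg, hg', dif_pos, dif_neg, not_false_iff]
        trivial
      · exact absurd (hI g g' hg' h) hg
      · simp only [hg, hg', dif_neg, not_false_iff]
        exact hψ.2 ⟨g, hg⟩ ⟨g', hg'⟩ h
  -- left inverse
  · rintro ⟨α, hα⟩
    refine Subtype.ext ?_
    refine Equiv.ext fun x => ?_
    cases x with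
    | inl e => rfl
    | inr f => rfl
  -- right inverse
  · rintro ⟨⟨I, hI⟩, ⟨φ, hφ⟩, ⟨ψ, hψ⟩⟩
    have hII : idealOf (glue I φ ψ) = I := by
      ext g
      rw [mem_idealOf_iff]
      constructor
      · rintro ⟨e, rfl⟩
        exact (φ e).2
      · intro hg
        exact ⟨φ.symm ⟨g, hg⟩, by simp [glue]⟩
    refine sigma_ext_helper rE1 rE2 rF1 rF2 rG1 rG2 _ _ ?_ ?_ ?_
    · exact hII
    · exact fun e => rfl
    · exact fun f => rfl
end

section
/- If α is a picture from the composition EF of double posets to a double poset G, then α(E) is an inferior ideal of (G,<₁) and α(F) is a superior ideal of (G,<₁). -/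
/-- If `α` is a picture from `EF` to `G` then `α(E)` is an inferior ideal of
`(G, <₁)` and `α(F)` is a superior ideal of `(G, <₁)`. -/
theorem picture_image_is_ideal
    {E F G : Type} [Fintype E] [Fintype F] [Fintype G]
    (rE1 rE2 : E → E → Prop) (rF1 rF2 : F → F → Prop) (rG1 rG2 : G → G → Prop)
    (hE1 : IsStrictOrder E rE1) (hE2 : IsStrictOrder E rE2)
    (hF1 : IsStrictOrder F rF1) (hF2 : IsStrictOrder F rF2)
    (hG1 : IsStrictOrder G rG1) (hG2 : IsStrictOrder G rG2)
    (α : (E ⊕ F) ≃ G)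
    (hα : IsPicture (compRel1 rE1 rF1) (compRel2 rE2 rF2) rG1 rG2 α) :
    (∀ x y, y ∈ Set.range (fun e : E => α (Sum.inl e)) → rG1 x y →
      x ∈ Set.range (fun e : E => α (Sum.inl e))) ∧
    (∀ x y, x ∈ Set.range (fun f : F => α (Sum.inr f)) → rG1 x y →
      y ∈ Set.range (fun f : F => α (Sum.inr f))) := by
  obtain ⟨h1, h2⟩ := hα
  constructor
  · rintro x y ⟨e, rfl⟩ hxy
    have := h2 x _ hxy
    rcases hz : α.symm x with z | f
    · exact ⟨z, by simp [← hz]⟩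
    · rw [hz, Equiv.symm_apply_apply] at this
      exact absurd this (by simp [compRel2])
  · rintro x y ⟨f, rfl⟩ hxy
    have := h2 _ y hxy
    rcases hz : α.symm y with e | z
    · rw [hz, Equiv.symm_apply_apply] at this
      exact absurd this (by simp [compRel2])
    · exact ⟨z, by simp [← hz]⟩
end

section
/- For permutations σ ∈ Sₙ and τ ∈ Sₙ, the internal product of the associated double posets satisfies P_σ ∘ P_τ = P_{σ∘τ}. Here the internal product of double posets E and F is the sum (in the free ℤ-module on double posets) over all increasing bijections φ: (E,<₁) → (F,<₂) of the double poset E ×_φ F; for permutation double posets there is exactly one such φ and the resulting double poset is P_{σ∘τ}. -/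
/-- First order of the double poset `P_σ`: `σ(1) <₁ σ(2) <₁ ... <₁ σ(n)`
(the second order being the natural order of `Fin n`). -/
def permRel1 {n : ℕ} (σ : Equiv.Perm (Fin n)) (a b : Fin n) : Prop :=
  σ.symm a < σ.symm b

lemma perm_key {n : ℕ} (σ φ : Equiv.Perm (Fin n))
    (h : ∀ a b : Fin n, permRel1 σ a b → φ a < φ b) : φ = σ.symm := by
  have I : WellFoundedLT (Fin n) := inferInstance
  have hg : StrictMono (fun i => φ (σ i)) := by
    intro i j hij
    exact h _ _ (by simpa [permRel1] using hij)
  have hsym : StrictMono (fun i => σ.symm (φ.symm i)) := by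
    intro a b hab
    rcases lt_trichotomy (σ.symm (φ.symm a)) (σ.symm (φ.symm b)) with hc|hc|hc
    · exact hc
    · exfalso
      have : φ.symm a = φ.symm b := σ.symm.injective hc
      have : a = b := φ.symm.injective this
      exact absurd this hab.ne
    · exfalso
      have := hg hc
      simp only [Equiv.apply_symm_apply] at this
      exact absurd hab (not_lt.mpr this.le)
  have hid : ∀ i, φ (σ i) = i := by
    intro i
    have h1 : i ≤ φ (σ i) := @StrictMono.le_apply (Fin n) _ I _ hg _
    have h2 : φ (σ i) ≤ i := by
      have h2' : φ (σ i) ≤ σ.symm (φ.symm (φ (σ i))) :=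
        @StrictMono.le_apply (Fin n) _ I _ hsym _
      simpa using h2'
    exact le_antisymm h2 h1
  apply Equiv.ext
  intro x
  have := hid (σ.symm x)
  simpa using this

/-- `P_σ ∘ P_τ = P_{σ∘τ}`: there is exactly one increasing bijection
`φ : (P_σ, <₁) → (P_τ, <₂)`, and for it the twisted double poset
`P_σ ×_φ P_τ` (realized on the common underlying set, with first order
pulled back along `φ` from the first order of `P_τ` and second order the
natural one) is the double poset `P_{σ∘τ}`. -/
theorem perm_internal_product {n : ℕ} (σ τ : Equiv.Perm (Fin n)) :
    (∃! φ : Equiv.Perm (Fin n), ∀ a b : Fin n, permRel1 σ a b → φ a < φ b) ∧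
    (∀ φ : Equiv.Perm (Fin n), (∀ a b : Fin n, permRel1 σ a b → φ a < φ b) →
      ∀ a b : Fin n, permRel1 τ (φ a) (φ b) ↔ permRel1 (σ * τ) a b) := by
  constructor
  · exact ⟨σ.symm, fun a b h => h, fun φ h => perm_key σ φ h⟩
  · intro φ h a b
    rw [perm_key σ φ h]
    simp [permRel1, Equiv.Perm.mul_def]
end

section
/- Let E, F, G be double posets. There is a bijection between (i) pairs (φ, α) where φ: (E,<₁) → (F,<₂) is an increasing bijection and α is a picture from E ×_φ F to G, and (ii) pairs (ψ, β) where ψ: (F,<₁) → (G,<₂) is an increasing bijection and β is a picture from E to F ×_ψ G. The bijection is given by ψ = α∘(φ⁻¹, id) and β = (id, ψ)∘φ, with inverse φ = p₁∘β and α = ψ∘p₂. -/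
/-- The bijection `(φ, α) ↦ (ψ, β) = (α∘(φ⁻¹,id), (id,ψ)∘φ)` between pairs
where `φ : (E,<₁) → (F,<₂)` is an increasing bijection and `α` a picture from
`E ×_φ F` to `G`, and pairs where `ψ : (F,<₁) → (G,<₂)` is an increasing
bijection and `β` a picture from `E` to `F ×_ψ G`.  The double poset
`E ×_φ F` is realized on `E` (first order pulled back along `φ` from the first
order of `F`, second order that of `E`); similarly `F ×_ψ G` on `F`. -/
theorem internal_product_picture_bijection
    {E F G : Type} [Fintype E] [Fintype F] [Fintype G]
    (rE1 rE2 : E → E → Prop) (rF1 rF2 : F → F → Prop) (rG1 rG2 : G → G → Prop)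
    (hE1 : IsStrictOrder E rE1) (hE2 : IsStrictOrder E rE2)
    (hF1 : IsStrictOrder F rF1) (hF2 : IsStrictOrder F rF2)
    (hG1 : IsStrictOrder G rG1) (hG2 : IsStrictOrder G rG2) :
    Set.BijOn
      (fun p : (E ≃ F) × (E ≃ G) => (p.1.symm.trans p.2, p.1))
      {p : (E ≃ F) × (E ≃ G) |
        (∀ e e', rE1 e e' → rF2 (p.1 e) (p.1 e')) ∧
        IsPicture (fun e e' => rF1 (p.1 e) (p.1 e')) rE2 rG1 rG2 p.2}
      {q : (F ≃ G) × (E ≃ F) |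
        (∀ f f', rF1 f f' → rG2 (q.1 f) (q.1 f')) ∧
        IsPicture rE1 rE2 (fun f f' => rG1 (q.1 f) (q.1 f')) rF2 q.2} := by
  refine ⟨?_, ?_, ?_⟩
  · rintro ⟨φ, α⟩ ⟨h1, h2a, h2b⟩
    refine ⟨?_, ⟨h1, ?_⟩⟩
    · intro f f' hf
      exact h2a (φ.symm f) (φ.symm f') (by simpa using hf)
    · intro f f' hg
      simpa using h2b _ _ hg
  · rintro ⟨φ, α⟩ - ⟨φ', α'⟩ - h
    simp only [Prod.mk.injEq] at h
    obtain ⟨h1, h2⟩ := h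
    subst h2
    refine Prod.ext rfl (Equiv.ext fun e => ?_)
    have := congrArg (fun ψ => ψ (φ e)) h1
    simpa using this
  · rintro ⟨ψ, β⟩ ⟨h1, h2a, h2b⟩
    refine ⟨⟨β, β.trans ψ⟩, ⟨h2a, ?_, ?_⟩, ?_⟩
    · intro e e' h
      exact h1 _ _ h
    · intro g g' hg
      exact h2b _ _ (by simpa using hg)
    · exact Prod.ext (Equiv.ext fun f => by simp) rfl
end

section
/- The internal product of double posets is compatible with the Zelevinsky pairing: for any double posets E, F, G, the number of pairs (φ, α) with φ an increasing bijection (E,<₁) → (F,<₂) and α a picture from E ×_φ F to G equals the number of pairs (ψ, β) with ψ an increasing bijection (F,<₁) → (G,<₂) and β a picture from E to F ×_ψ G. In other words, ⟨E ∘ F, G⟩ = ⟨E, F ∘ G⟩. -/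
/-- Compatibility of the internal product with the Zelevinsky pairing:
`⟨E ∘ F, G⟩ = ⟨E, F ∘ G⟩`, i.e. the number of pairs `(φ, α)` with
`φ : (E,<₁) → (F,<₂)` increasing and `α` a picture from `E ×_φ F` to `G`
equals the number of pairs `(ψ, β)` with `ψ : (F,<₁) → (G,<₂)` increasing and
`β` a picture from `E` to `F ×_ψ G` (the twisted double posets being realized
on `E` resp. `F`). -/
theorem internal_product_compatible_with_pairing
    {E F G : Type} [Fintype E] [Fintype F] [Fintype G]
    (rE1 rE2 : E → E → Prop) (rF1 rF2 : F → F → Prop) (rG1 rG2 : G → G → Prop)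
    (hE1 : IsStrictOrder E rE1) (hE2 : IsStrictOrder E rE2)
    (hF1 : IsStrictOrder F rF1) (hF2 : IsStrictOrder F rF2)
    (hG1 : IsStrictOrder G rG1) (hG2 : IsStrictOrder G rG2) :
    Nat.card {p : (E ≃ F) × (E ≃ G) //
        (∀ e e', rE1 e e' → rF2 (p.1 e) (p.1 e')) ∧
        IsPicture (fun e e' => rF1 (p.1 e) (p.1 e')) rE2 rG1 rG2 p.2} =
    Nat.card {q : (F ≃ G) × (E ≃ F) //
        (∀ f f', rF1 f f' → rG2 (q.1 f) (q.1 f')) ∧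
        IsPicture rE1 rE2 (fun f f' => rG1 (q.1 f) (q.1 f')) rF2 q.2} := by
  refine Nat.card_congr
    ⟨fun p => ⟨(p.1.1.symm.trans p.1.2, p.1.1), ?_, ?_, ?_⟩,
     fun q => ⟨(q.1.2, q.1.2.trans q.1.1), ?_, ?_, ?_⟩, fun p => ?_, fun q => ?_⟩
  · intro f f' h
    simpa using p.2.2.1 (p.1.1.symm f) (p.1.1.symm f') (by simpa using h)
  · exact p.2.1
  · intro f f' h
    have := p.2.2.2 (p.1.2 (p.1.1.symm f)) (p.1.2 (p.1.1.symm f')) h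
    rwa [Equiv.symm_apply_apply, Equiv.symm_apply_apply] at this
  · intro e e' h
    exact q.2.2.1 e e' h
  · intro e e' h
    simpa using q.2.1 _ _ h
  · intro g g' h
    simpa using q.2.2.2 _ _ (by simpa using h)
  · exact Subtype.ext (Prod.ext (by ext x; simp) (by ext x; simp))
  · exact Subtype.ext (Prod.ext (by ext x; simp) (by ext x; simp))
end

section
/- Let π = (E,<₁,<₂) be a special double poset on {1,...,n} with <₂ the natural order. The map (σ,u,v) ↦ (I, S, st(u), st(v)) — where σ is a linear extension of (E,<₁), σ = uv is a factorization of the word σ, I is the set of digits in u, and S the set of digits in v — is a bijection from the set of such triples to the set of quadruples (I, S, α, β) with I an inferior ideal of (E,<₁), S its complement, and α, β linear extensions of (I,<₁) and (S,<₁) respectively. -/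
/-- `σ` is a linear extension of the special double poset `({1,...,n}, r, <nat)`
iff `σ⁻¹` is increasing from `r` to the natural order. -/
def LinExt {n : ℕ} (r : Fin n → Fin n → Prop) (σ : Equiv.Perm (Fin n)) : Prop :=
  ∀ a b, r a b → σ.symm a < σ.symm b

namespace LEDB

open Finset

variable {n : ℕ}

lemma val_lt_n {I : Finset (Fin n)} (i : Fin I.card) : (i : ℕ) < n :=
  i.2.trans_le (by simpa using I.card_le_univ)

def emb (I : Finset (Fin n)) (i : Fin I.card) : Fin n := ⟨i, val_lt_n i⟩

lemma card_compl' (I : Finset (Fin n)) : Iᶜ.card = n - I.card := by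
  simp [Finset.card_compl]

def Idl (σ : Equiv.Perm (Fin n)) (m : ℕ) : Finset (Fin n) :=
  (Finset.univ.filter fun j : Fin n => (j : ℕ) < m).image σ

lemma mem_Idl {σ : Equiv.Perm (Fin n)} {m : ℕ} {x : Fin n} :
    x ∈ Idl σ m ↔ (σ.symm x : ℕ) < m := by
  simp only [Idl, mem_image, mem_filter, mem_univ, true_and]
  constructor
  · rintro ⟨j, hj, rfl⟩; simpa using hj
  · intro h; exact ⟨σ.symm x, h, by simp⟩

lemma card_Idl {σ : Equiv.Perm (Fin n)} {m : ℕ} (hm : m ≤ n) :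
    (Idl σ m).card = m := by
  rw [Idl, Finset.card_image_of_injective _ σ.injective]
  have : (Finset.univ.filter fun j : Fin n => (j : ℕ) < m)
      = Finset.univ.map (Fin.castLEEmb hm) := by
    ext x
    simp only [Finset.mem_filter, Finset.mem_univ, true_and, Finset.mem_map,
      Fin.castLEEmb, Function.Embedding.coeFn_mk, Fin.castLE]
    constructor
    · intro hx; exact ⟨⟨x, hx⟩, by simp [Fin.ext_iff]⟩
    · rintro ⟨y, hy⟩; rw [← hy]; exact y.2
  simp [this]

/-! forward direction -/

variable (σ : Equiv.Perm (Fin n)) (m : ℕ)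

def fa (hm : m ≤ n) (i : Fin (Idl σ m).card) : Fin (Idl σ m).card :=
  ((Idl σ m).orderIsoOfFin rfl).symm ⟨σ (emb _ i), by
    rw [mem_Idl, Equiv.symm_apply_apply]
    exact lt_of_lt_of_le i.2 (card_Idl hm).le⟩

lemma fa_inj (hm : m ≤ n) : Function.Injective (fa σ m hm) := by
  intro i j h
  have h2 := Subtype.ext_iff.mp (((Idl σ m).orderIsoOfFin rfl).symm.injective h)
  exact Fin.ext (Fin.mk.injEq _ _ _ _ ▸ σ.injective h2)

noncomputable def fα (hm : m ≤ n) : Equiv.Perm (Fin (Idl σ m).card) :=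
  Equiv.ofBijective _ (Finite.injective_iff_bijective.mp (fa_inj σ m hm))

lemma fα_apply (hm : m ≤ n) (i : Fin (Idl σ m).card) (hn : (i : ℕ) < n) :
    (((Idl σ m).orderIsoOfFin rfl) (fα σ m hm i) : Fin n) = σ ⟨i, hn⟩ := by
  show ((((Idl σ m).orderIsoOfFin rfl) (fa σ m hm i) : Fin n)) = σ ⟨i, hn⟩
  rw [fa, OrderIso.apply_symm_apply]
  rfl

def fb (hm : m ≤ n) (j : Fin (Idl σ m)ᶜ.card) : Fin (Idl σ m)ᶜ.card :=
  ((Idl σ m)ᶜ.orderIsoOfFin rfl).symm ⟨σ ⟨m + j, by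
      have h2 := card_compl' (Idl σ m)
      have h3 := card_Idl (σ := σ) hm
      have h4 := j.2
      omega⟩, by
    rw [Finset.mem_compl, mem_Idl, Equiv.symm_apply_apply]
    simp⟩

lemma fb_inj (hm : m ≤ n) : Function.Injective (fb σ m hm) := by
  intro i j h
  have h2 := Subtype.ext_iff.mp (((Idl σ m)ᶜ.orderIsoOfFin rfl).symm.injective h)
  have h3 := σ.injective h2
  have h4 := Fin.mk.injEq _ _ _ _ ▸ h3
  exact Fin.ext (by omega)

noncomputable def fβ (hm : m ≤ n) : Equiv.Perm (Fin (Idl σ m)ᶜ.card) :=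
  Equiv.ofBijective _ (Finite.injective_iff_bijective.mp (fb_inj σ m hm))

lemma fβ_apply (hm : m ≤ n) (j : Fin (Idl σ m)ᶜ.card) (hn : m + (j : ℕ) < n) :
    (((Idl σ m)ᶜ.orderIsoOfFin rfl) (fβ σ m hm j) : Fin n) = σ ⟨m + j, hn⟩ := by
  show ((((Idl σ m)ᶜ.orderIsoOfFin rfl) (fb σ m hm j) : Fin n)) = σ ⟨m + j, hn⟩
  rw [fb, OrderIso.apply_symm_apply]

/-! backward direction -/

def g (I : Finset (Fin n))
    (ab : Equiv.Perm (Fin I.card) × Equiv.Perm (Fin Iᶜ.card)) (x : Fin n) : Fin n :=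
  if h : (x : ℕ) < I.card then (I.orderIsoOfFin rfl (ab.1 ⟨x, h⟩) : Fin n)
  else (Iᶜ.orderIsoOfFin rfl (ab.2 ⟨(x : ℕ) - I.card, by
    have := card_compl' I; have := x.2; omega⟩) : Fin n)

lemma g_mem (I : Finset (Fin n))
    (ab : Equiv.Perm (Fin I.card) × Equiv.Perm (Fin Iᶜ.card)) (x : Fin n) :
    g I ab x ∈ I ↔ (x : ℕ) < I.card := by
  rw [g]; split_ifs with h
  · simp only [h, iff_true]; exact Finset.coe_mem _
  · simp only [h, iff_false]
    exact Finset.mem_compl.mp (Finset.coe_mem _)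

lemma g_inj (I : Finset (Fin n))
    (ab : Equiv.Perm (Fin I.card) × Equiv.Perm (Fin Iᶜ.card)) :
    Function.Injective (g I ab) := by
  intro x y hxy
  by_cases hx : (x : ℕ) < I.card <;> by_cases hy : (y : ℕ) < I.card
  · rw [g, dif_pos hx, g, dif_pos hy] at hxy
    have := ab.1.injective ((I.orderIsoOfFin rfl).injective (Subtype.coe_injective hxy))
    exact Fin.ext (Fin.mk.injEq _ _ _ _ ▸ this)
  · exfalso
    have h1 := (g_mem I ab x).mpr hx
    rw [hxy, g_mem] at h1; exact hy h1
  · exfalso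
    have h1 := (g_mem I ab y).mpr hy
    rw [← hxy, g_mem] at h1; exact hx h1
  · rw [g, dif_neg hx, g, dif_neg hy] at hxy
    have := ab.2.injective ((Iᶜ.orderIsoOfFin rfl).injective (Subtype.coe_injective hxy))
    have h4 := Fin.mk.injEq _ _ _ _ ▸ this
    exact Fin.ext (by omega)

noncomputable def gσ (I : Finset (Fin n))
    (ab : Equiv.Perm (Fin I.card) × Equiv.Perm (Fin Iᶜ.card)) : Equiv.Perm (Fin n) :=
  Equiv.ofBijective _ (Finite.injective_iff_bijective.mp (g_inj I ab))

lemma gσ_apply (I ab x) : gσ (n := n) I ab x = g I ab x := rfl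

lemma mem_iff_gσ (I : Finset (Fin n)) (ab) (x : Fin n) :
    x ∈ I ↔ (((gσ I ab).symm x : Fin n) : ℕ) < I.card := by
  rw [← g_mem I ab ((gσ I ab).symm x),
    show g I ab ((gσ I ab).symm x) = x from (gσ I ab).apply_symm_apply x]

/-! linear extension property of `gσ` -/

variable {r1 : Fin n → Fin n → Prop}

lemma gσ_linext (I : Finset (Fin n))
    (ab : Equiv.Perm (Fin I.card) × Equiv.Perm (Fin Iᶜ.card))
    (hid : ∀ x y, y ∈ I → r1 x y → x ∈ I)
    (hα : ∀ i j : Fin I.card,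
      r1 (I.orderIsoOfFin rfl i) (I.orderIsoOfFin rfl j) → ab.1.symm i < ab.1.symm j)
    (hβ : ∀ i j : Fin Iᶜ.card,
      r1 (Iᶜ.orderIsoOfFin rfl i) (Iᶜ.orderIsoOfFin rfl j) → ab.2.symm i < ab.2.symm j) :
    LinExt r1 (gσ I ab) := by
  intro a b hab
  set k := (gσ I ab).symm a with hk
  set l := (gσ I ab).symm b with hl
  have ha : g I ab k = a := (gσ I ab).apply_symm_apply a
  have hb : g I ab l = b := (gσ I ab).apply_symm_apply b
  rw [← ha, ← hb] at hab
  rw [Fin.lt_def]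
  by_cases hkc : (k : ℕ) < I.card <;> by_cases hlc : (l : ℕ) < I.card
  · rw [g, dif_pos hkc, g, dif_pos hlc] at hab
    have h2 := hα _ _ hab
    simp only [Equiv.symm_apply_apply] at h2
    exact h2
  · omega
  · exfalso
    have hbI : g I ab l ∈ I := (g_mem I ab l).mpr hlc
    have haI := hid (g I ab k) (g I ab l) hbI hab
    rw [g_mem] at haI
    exact hkc haI
  · rw [g, dif_neg hkc, g, dif_neg hlc] at hab
    have h2 := hβ _ _ hab
    simp only [Equiv.symm_apply_apply] at h2
    rw [Fin.lt_def] at h2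
    simp only [] at h2
    omega

/-! forward map properties -/

lemma fwd_prop1 (σ : Equiv.Perm (Fin n)) (m : ℕ) (hle : LinExt r1 σ) :
    ∀ x y, y ∈ Idl σ m → r1 x y → x ∈ Idl σ m := by
  intro x y hy hxy
  rw [mem_Idl] at hy ⊢
  exact (Fin.lt_def.mp (hle x y hxy)).trans hy

lemma fwd_prop2 (σ : Equiv.Perm (Fin n)) (m : ℕ) (hle : LinExt r1 σ) (hm : m ≤ n) :
    ∀ i j : Fin (Idl σ m).card,
      r1 ((Idl σ m).orderIsoOfFin rfl i) ((Idl σ m).orderIsoOfFin rfl j) →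
        (fα σ m hm).symm i < (fα σ m hm).symm j := by
  intro i j hij
  have hi : ((Idl σ m).orderIsoOfFin rfl i : Fin n)
      = σ ⟨((fα σ m hm).symm i : ℕ), val_lt_n _⟩ := by
    conv_lhs => rw [← (fα σ m hm).apply_symm_apply i]
    exact fα_apply σ m hm _ (val_lt_n _)
  have hj : ((Idl σ m).orderIsoOfFin rfl j : Fin n)
      = σ ⟨((fα σ m hm).symm j : ℕ), val_lt_n _⟩ := by
    conv_lhs => rw [← (fα σ m hm).apply_symm_apply j]
    exact fα_apply σ m hm _ (val_lt_n _)
  rw [hi, hj] at hij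
  have h2 := hle _ _ hij
  simp only [Equiv.symm_apply_apply, Fin.lt_def] at h2
  exact Fin.lt_def.mpr h2

lemma fwd_prop3 (σ : Equiv.Perm (Fin n)) (m : ℕ) (hle : LinExt r1 σ) (hm : m ≤ n) :
    ∀ i j : Fin (Idl σ m)ᶜ.card,
      r1 (((Idl σ m)ᶜ).orderIsoOfFin rfl i) (((Idl σ m)ᶜ).orderIsoOfFin rfl j) →
        (fβ σ m hm).symm i < (fβ σ m hm).symm j := by
  intro i j hij
  have hcc := card_compl' (Idl σ m)
  have hcI : (Idl σ m).card = m := card_Idl hm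
  have hni : m + (((fβ σ m hm).symm i : Fin (Idl σ m)ᶜ.card) : ℕ) < n := by
    have := ((fβ σ m hm).symm i).2; omega
  have hnj : m + (((fβ σ m hm).symm j : Fin (Idl σ m)ᶜ.card) : ℕ) < n := by
    have := ((fβ σ m hm).symm j).2; omega
  have hi : (((Idl σ m)ᶜ).orderIsoOfFin rfl i : Fin n)
      = σ ⟨m + ((fβ σ m hm).symm i : ℕ), hni⟩ := by
    conv_lhs => rw [← (fβ σ m hm).apply_symm_apply i]
    exact fβ_apply σ m hm _ hni
  have hj : (((Idl σ m)ᶜ).orderIsoOfFin rfl j : Fin n)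
      = σ ⟨m + ((fβ σ m hm).symm j : ℕ), hnj⟩ := by
    conv_lhs => rw [← (fβ σ m hm).apply_symm_apply j]
    exact fβ_apply σ m hm _ hnj
  rw [hi, hj] at hij
  have h2 := hle _ _ hij
  simp only [Equiv.symm_apply_apply, Fin.lt_def] at h2
  rw [Fin.lt_def]
  omega

/-! the forward and backward maps -/

variable (r1 : Fin n → Fin n → Prop)

noncomputable def fwd (p : {p : Equiv.Perm (Fin n) × ℕ // LinExt r1 p.1 ∧ p.2 ≤ n}) :
    {q : (I : Finset (Fin n)) ×
          (Equiv.Perm (Fin I.card) × Equiv.Perm (Fin (Iᶜ).card)) //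
      (∀ x y, y ∈ q.1 → r1 x y → x ∈ q.1) ∧
      (∀ i j : Fin q.1.card,
        r1 (q.1.orderIsoOfFin rfl i) (q.1.orderIsoOfFin rfl j) →
          q.2.1.symm i < q.2.1.symm j) ∧
      (∀ i j : Fin (q.1ᶜ).card,
        r1 ((q.1ᶜ).orderIsoOfFin rfl i) ((q.1ᶜ).orderIsoOfFin rfl j) →
          q.2.2.symm i < q.2.2.symm j)} :=
  ⟨⟨Idl p.1.1 p.1.2, fα p.1.1 p.1.2 p.2.2, fβ p.1.1 p.1.2 p.2.2⟩,
    fwd_prop1 p.1.1 p.1.2 p.2.1,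
    fwd_prop2 p.1.1 p.1.2 p.2.1 p.2.2,
    fwd_prop3 p.1.1 p.1.2 p.2.1 p.2.2⟩

noncomputable def bwd
    (q : {q : (I : Finset (Fin n)) ×
          (Equiv.Perm (Fin I.card) × Equiv.Perm (Fin (Iᶜ).card)) //
      (∀ x y, y ∈ q.1 → r1 x y → x ∈ q.1) ∧
      (∀ i j : Fin q.1.card,
        r1 (q.1.orderIsoOfFin rfl i) (q.1.orderIsoOfFin rfl j) →
          q.2.1.symm i < q.2.1.symm j) ∧
      (∀ i j : Fin (q.1ᶜ).card,
        r1 ((q.1ᶜ).orderIsoOfFin rfl i) ((q.1ᶜ).orderIsoOfFin rfl j) →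
          q.2.2.symm i < q.2.2.symm j)}) :
    {p : Equiv.Perm (Fin n) × ℕ // LinExt r1 p.1 ∧ p.2 ≤ n} :=
  ⟨⟨gσ q.1.1 q.1.2, q.1.1.card⟩,
    gσ_linext q.1.1 q.1.2 q.2.1 q.2.2.1 q.2.2.2,
    by simpa using q.1.1.card_le_univ⟩

lemma leftInv : Function.LeftInverse (bwd r1) (fwd r1) := by
  rintro ⟨⟨σ, m⟩, hle, hm⟩
  apply Subtype.ext
  have h2 : (Idl σ m).card = m := card_Idl (σ := σ) (m := m) hm
  refine Prod.ext ?_ h2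
  apply Equiv.ext; intro x
  show g (Idl σ m) (fα σ m hm, fβ σ m hm) x = σ x
  rw [g]; split_ifs with hx
  · dsimp only
    rw [fα_apply σ m hm ⟨(x : ℕ), hx⟩ x.2]
  · have hcc := card_compl' (Idl σ m)
    have hxv := x.2
    have hn : m + ((x : ℕ) - (Idl σ m).card) < n := by omega
    dsimp only
    rw [fβ_apply σ m hm _ hn]
    refine congrArg σ (Fin.ext ?_)
    show m + ((x : ℕ) - (Idl σ m).card) = (x : ℕ)
    omega

lemma bwd_inj : Function.Injective (bwd r1) := by
  rintro ⟨⟨I, a⟩, hq⟩ ⟨⟨J, b⟩, hq'⟩ h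
  have h' := Subtype.ext_iff.mp h
  have hσ : gσ I a = gσ J b := congrArg Prod.fst h'
  have hc : I.card = J.card := congrArg Prod.snd h'
  have hIJ : I = J := by
    ext x
    rw [mem_iff_gσ I a x, mem_iff_gσ J b x, hσ, hc]
  subst hIJ
  apply Subtype.ext
  refine congrArg (Sigma.mk I) ?_
  have key : ∀ x : Fin n, g I a x = g I b x := fun x => DFunLike.congr_fun hσ x
  refine Prod.ext ?_ ?_
  · apply Equiv.ext; intro i
    have hx := key (emb I i)
    rw [g, dif_pos (show ((emb I i : Fin n) : ℕ) < I.card from i.2),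
      g, dif_pos (show ((emb I i : Fin n) : ℕ) < I.card from i.2)] at hx
    have h3 := (I.orderIsoOfFin rfl).injective (Subtype.coe_injective hx)
    have h4 : (⟨((emb I i : Fin n) : ℕ), i.2⟩ : Fin I.card) = i := Fin.ext rfl
    rw [h4] at h3
    exact h3
  · apply Equiv.ext; intro j
    have hcc := card_compl' I
    have hjn : I.card + (j : ℕ) < n := by have := j.2; omega
    have hx := key ⟨I.card + (j : ℕ), hjn⟩
    have hneg : ¬ (((⟨I.card + (j : ℕ), hjn⟩ : Fin n)) : ℕ) < I.card := by
      show ¬ I.card + (j : ℕ) < I.card; omega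
    rw [g, dif_neg hneg, g, dif_neg hneg] at hx
    have h3 := (Iᶜ.orderIsoOfFin rfl).injective (Subtype.coe_injective hx)
    have h4 : (⟨(((⟨I.card + (j : ℕ), hjn⟩ : Fin n)) : ℕ) - I.card, by
        have := j.2; show I.card + (j : ℕ) - I.card < Iᶜ.card; omega⟩ : Fin Iᶜ.card) = j := by
      apply Fin.ext
      show I.card + (j : ℕ) - I.card = (j : ℕ)
      omega
    rw [h4] at h3
    exact h3

end LEDB

/-- The bijection `(σ, u, v) ↦ (I, S, st(u), st(v))` between triples consisting
of a linear extension `σ` of `(E,<₁)` together with a factorization `σ = uv`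
(encoded by the split point `p.2 ≤ n`), and quadruples `(I, S = Iᶜ, α, β)` with
`I` an inferior ideal of `(E,<₁)` and `α, β` linear extensions of `(I,<₁)` and
`(S,<₁)`.  Here `I` is the set of digits of `u`, `st(u) i` is the rank in `I`
of the `i`-th letter of `u`, and similarly for `v` and `Iᶜ`. -/
theorem linear_extension_decomposition_bijection
    {n : ℕ} (r1 : Fin n → Fin n → Prop) (h1 : IsStrictOrder (Fin n) r1) :
    ∃ b :
      {p : Equiv.Perm (Fin n) × ℕ // LinExt r1 p.1 ∧ p.2 ≤ n} ≃
      {q : (I : Finset (Fin n)) ×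
            (Equiv.Perm (Fin I.card) × Equiv.Perm (Fin (Iᶜ).card)) //
        (∀ x y, y ∈ q.1 → r1 x y → x ∈ q.1) ∧
        (∀ i j : Fin q.1.card,
          r1 (q.1.orderIsoOfFin rfl i) (q.1.orderIsoOfFin rfl j) →
            q.2.1.symm i < q.2.1.symm j) ∧
        (∀ i j : Fin (q.1ᶜ).card,
          r1 ((q.1ᶜ).orderIsoOfFin rfl i) ((q.1ᶜ).orderIsoOfFin rfl j) →
            q.2.2.symm i < q.2.2.symm j)},
      ∀ p,
        (b p).1.1 =
          (Finset.univ.filter fun j : Fin n => (j : ℕ) < p.1.2).image p.1.1 ∧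
        (∀ (i : ℕ) (hi : i < (b p).1.1.card) (hn : i < n),
          (((b p).1.1.orderIsoOfFin rfl) ((b p).1.2.1 ⟨i, hi⟩) : Fin n) =
            p.1.1 ⟨i, hn⟩) ∧
        (∀ (j : ℕ) (hj : j < ((b p).1.1ᶜ).card) (hn : p.1.2 + j < n),
          ((((b p).1.1ᶜ).orderIsoOfFin rfl) ((b p).1.2.2 ⟨j, hj⟩) : Fin n) =
            p.1.1 ⟨p.1.2 + j, hn⟩) := by

  refine ⟨⟨LEDB.fwd r1, LEDB.bwd r1, LEDB.leftInv r1,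
    fun q => LEDB.bwd_inj r1 (LEDB.leftInv r1 (LEDB.bwd r1 q))⟩, ?_⟩
  intro p
  refine ⟨rfl, ?_, ?_⟩
  · intro i hi hn
    exact LEDB.fα_apply p.1.1 p.1.2 p.2.2 ⟨i, hi⟩ hn
  · intro j hj hn
    exact LEDB.fβ_apply p.1.1 p.1.2 p.2.2 ⟨j, hj⟩ hn
end

section
/- The set of linear extensions of the composition ππ' of two special double posets π and π' equals the shifted shuffle product of the set of linear extensions of π with that of π'. Here, if |π| = n and |π'| = p, the shifted shuffle of permutations σ ∈ Sₙ and τ ∈ S_p is the set of shuffles of the word σ with the word τ̄ obtained from τ by adding n to each letter. -/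
/-- First order of the composition `ππ'` of two special double posets realized
on `Fin (n+p)` (second orders being the natural orders). -/
def fcompRel1 {n p : ℕ} (rE : Fin n → Fin n → Prop) (rF : Fin p → Fin p → Prop)
    (a b : Fin (n + p)) : Prop :=
  (∃ (ha : (a : ℕ) < n) (hb : (b : ℕ) < n), rE ⟨a, ha⟩ ⟨b, hb⟩) ∨
  (∃ (_ : n ≤ (a : ℕ)) (_ : n ≤ (b : ℕ)),
    rF ⟨(a : ℕ) - n, by have := a.isLt; omega⟩ ⟨(b : ℕ) - n, by have := b.isLt; omega⟩)

/-- `ρ` lies in the shifted shuffle of `σ ∈ Sₙ` and `τ ∈ S_p`: the word `ρ` is a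
shuffle of the word `σ` with the word `τ̄` obtained from `τ` by adding `n` to
each letter. -/
def IsShiftedShuffle {n p : ℕ} (σ : Equiv.Perm (Fin n)) (τ : Equiv.Perm (Fin p))
    (ρ : Equiv.Perm (Fin (n + p))) : Prop :=
  (∃ a : Fin n → Fin (n + p), StrictMono a ∧ ∀ i, (ρ (a i) : ℕ) = σ i) ∧
  (∃ b : Fin p → Fin (n + p), StrictMono b ∧ ∀ j, (ρ (b j) : ℕ) = n + τ j)

lemma card_low {n p : ℕ} (ρ : Equiv.Perm (Fin (n + p))) :
    (Finset.univ.filter (fun x => ((ρ x : ℕ) < n))).card = n := by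
  have h1 : Finset.univ.filter (fun x : Fin (n + p) => ((ρ x : ℕ) < n))
      = (Finset.univ.filter (fun y : Fin (n + p) => (y : ℕ) < n)).image ρ.symm := by
    ext x
    simp only [Finset.mem_filter, Finset.mem_univ, true_and, Finset.mem_image]
    constructor
    · intro hx; exact ⟨ρ x, hx, ρ.symm_apply_apply x⟩
    · rintro ⟨y, hy, rfl⟩; simpa using hy
  have h2 : (Finset.univ.filter (fun y : Fin (n + p) => (y : ℕ) < n))
      = Finset.univ.map (Fin.castAddEmb p) := by
    ext y
    simp only [Finset.mem_filter, Finset.mem_univ, true_and, Finset.mem_map]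
    constructor
    · intro hy; exact ⟨⟨y, hy⟩, Fin.ext rfl⟩
    · rintro ⟨z, -, rfl⟩
      simpa [Fin.castAddEmb] using z.isLt
  rw [h1, Finset.card_image_of_injective _ ρ.symm.injective, h2, Finset.card_map,
    Finset.card_univ, Fintype.card_fin]

lemma card_high {n p : ℕ} (ρ : Equiv.Perm (Fin (n + p))) :
    (Finset.univ.filter (fun x => (n ≤ (ρ x : ℕ)))).card = p := by
  have := card_low ρ
  have hcompl : (Finset.univ.filter (fun x => (n ≤ (ρ x : ℕ))))
      = (Finset.univ.filter (fun x => ((ρ x : ℕ) < n)))ᶜ := by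
    ext x; simp [not_lt]
  rw [hcompl, Finset.card_compl, this, Fintype.card_fin]
  omega

set_option maxHeartbeats 1000000 in
/-- The set of linear extensions of the composition `ππ'` of two special double
posets is the shifted shuffle product of the sets of linear extensions of `π`
and of `π'`. -/
theorem linear_extensions_of_composition_eq_shifted_shuffle
    {n p : ℕ} (rE : Fin n → Fin n → Prop) (rF : Fin p → Fin p → Prop)
    (hE : IsStrictOrder (Fin n) rE) (hF : IsStrictOrder (Fin p) rF) :
    ∀ ρ : Equiv.Perm (Fin (n + p)),
      LinExt (fcompRel1 rE rF) ρ ↔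
        ∃ (σ : Equiv.Perm (Fin n)) (τ : Equiv.Perm (Fin p)),
          LinExt rE σ ∧ LinExt rF τ ∧ IsShiftedShuffle σ τ ρ := by
  intro ρ
  constructor
  · intro h
    -- low enumeration
    let a : Fin n → Fin (n + p) := fun i =>
      (((Finset.univ.filter (fun x => ((ρ x : ℕ) < n))).orderIsoOfFin (card_low ρ)) i : Fin (n + p))
    have ha_mono : StrictMono a := fun i j hij =>
      Subtype.coe_lt_coe.2 (((Finset.univ.filter
        (fun x => ((ρ x : ℕ) < n))).orderIsoOfFin (card_low ρ)).strictMono hij)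
    have ha_mem : ∀ i, (ρ (a i) : ℕ) < n := fun i =>
      (Finset.mem_filter.mp (((Finset.univ.filter
        (fun x => ((ρ x : ℕ) < n))).orderIsoOfFin (card_low ρ)) i).2).2
    let f : Fin n → Fin n := fun i => ⟨ρ (a i), ha_mem i⟩
    have hf_inj : Function.Injective f := by
      intro i j hij
      have h1 : ((ρ (a i)) : ℕ) = ((ρ (a j)) : ℕ) := by simpa [f, Fin.ext_iff] using hij
      exact ha_mono.injective (ρ.injective (Fin.ext h1))
    let σ : Equiv.Perm (Fin n) := Equiv.ofBijective f (Finite.injective_iff_bijective.mp hf_inj)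
    have hσa : ∀ i, (ρ (a i) : ℕ) = σ i := fun i => rfl
    -- high enumeration
    let b : Fin p → Fin (n + p) := fun j =>
      (((Finset.univ.filter (fun x => (n ≤ (ρ x : ℕ)))).orderIsoOfFin (card_high ρ)) j : Fin (n + p))
    have hb_mono : StrictMono b := fun i j hij =>
      Subtype.coe_lt_coe.2 (((Finset.univ.filter
        (fun x => (n ≤ (ρ x : ℕ)))).orderIsoOfFin (card_high ρ)).strictMono hij)
    have hb_mem : ∀ j, n ≤ (ρ (b j) : ℕ) := fun j =>
      (Finset.mem_filter.mp (((Finset.univ.filter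
        (fun x => (n ≤ (ρ x : ℕ)))).orderIsoOfFin (card_high ρ)) j).2).2
    let g : Fin p → Fin p := fun j => ⟨(ρ (b j) : ℕ) - n, by
      have h1 := (ρ (b j)).isLt; have h2 := hb_mem j; omega⟩
    have hg_inj : Function.Injective g := by
      intro i j hij
      have h1 : ((ρ (b i) : ℕ)) - n = ((ρ (b j) : ℕ)) - n := by
        simpa [g, Fin.ext_iff] using hij
      have h2 := hb_mem i
      have h3 := hb_mem j
      exact hb_mono.injective (ρ.injective (Fin.ext (by omega)))
    let τ : Equiv.Perm (Fin p) := Equiv.ofBijective g (Finite.injective_iff_bijective.mp hg_inj)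
    have hτb : ∀ j, (ρ (b j) : ℕ) = n + τ j := fun j => by
      have h1 := hb_mem j
      have h2 : (τ j : ℕ) = (ρ (b j) : ℕ) - n := rfl
      omega
    refine ⟨σ, τ, ?_, ?_, ⟨a, ha_mono, hσa⟩, ⟨b, hb_mono, hτb⟩⟩
    · intro x y hxy
      have hxlt : (x : ℕ) < n + p := by have := x.isLt; omega
      have hylt : (y : ℕ) < n + p := by have := y.isLt; omega
      have hfi : ((ρ (a (σ.symm x)) : ℕ)) = (x : ℕ) := by
        rw [hσa, Equiv.apply_symm_apply]
      have hfj : ((ρ (a (σ.symm y)) : ℕ)) = (y : ℕ) := by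
        rw [hσa, Equiv.apply_symm_apply]
      have hX : ρ (a (σ.symm x)) = (⟨(x : ℕ), hxlt⟩ : Fin (n + p)) := Fin.ext hfi
      have hY : ρ (a (σ.symm y)) = (⟨(y : ℕ), hylt⟩ : Fin (n + p)) := Fin.ext hfj
      have hrel : fcompRel1 rE rF (⟨(x : ℕ), hxlt⟩ : Fin (n + p)) ⟨(y : ℕ), hylt⟩ :=
        Or.inl ⟨x.isLt, y.isLt, by simpa using hxy⟩
      have hlt := h _ _ hrel
      have e1 : ρ.symm (⟨(x : ℕ), hxlt⟩ : Fin (n + p)) = a (σ.symm x) :=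
        (Equiv.symm_apply_eq ρ).2 hX.symm
      have e2 : ρ.symm (⟨(y : ℕ), hylt⟩ : Fin (n + p)) = a (σ.symm y) :=
        (Equiv.symm_apply_eq ρ).2 hY.symm
      rw [e1, e2] at hlt
      exact ha_mono.lt_iff_lt.mp hlt
    · intro x y hxy
      have hxlt : n + (x : ℕ) < n + p := by have := x.isLt; omega
      have hylt : n + (y : ℕ) < n + p := by have := y.isLt; omega
      have hgi : ((ρ (b (τ.symm x)) : ℕ)) = n + (x : ℕ) := by
        rw [hτb, Equiv.apply_symm_apply]
      have hgj : ((ρ (b (τ.symm y)) : ℕ)) = n + (y : ℕ) := by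
        rw [hτb, Equiv.apply_symm_apply]
      have hX : ρ (b (τ.symm x)) = (⟨n + (x : ℕ), hxlt⟩ : Fin (n + p)) := Fin.ext hgi
      have hY : ρ (b (τ.symm y)) = (⟨n + (y : ℕ), hylt⟩ : Fin (n + p)) := Fin.ext hgj
      have hrel : fcompRel1 rE rF (⟨n + (x : ℕ), hxlt⟩ : Fin (n + p)) ⟨n + (y : ℕ), hylt⟩ := by
        right
        refine ⟨Nat.le_add_right n x, Nat.le_add_right n y, ?_⟩
        convert hxy using 2
        · exact show n + (x : ℕ) - n = (x : ℕ) by omega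
        · exact show n + (y : ℕ) - n = (y : ℕ) by omega
      have hlt := h _ _ hrel
      have e1 : ρ.symm (⟨n + (x : ℕ), hxlt⟩ : Fin (n + p)) = b (τ.symm x) :=
        (Equiv.symm_apply_eq ρ).2 hX.symm
      have e2 : ρ.symm (⟨n + (y : ℕ), hylt⟩ : Fin (n + p)) = b (τ.symm y) :=
        (Equiv.symm_apply_eq ρ).2 hY.symm
      rw [e1, e2] at hlt
      exact hb_mono.lt_iff_lt.mp hlt
  · rintro ⟨σ, τ, hσ, hτ, ⟨a, ha_mono, hσa⟩, ⟨b, hb_mono, hτb⟩⟩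
    intro A B hAB
    rcases hAB with ⟨hA, hB, hr⟩ | ⟨hA, hB, hr⟩
    · have hi := hσ _ _ hr
      have hAi : ρ (a (σ.symm ⟨A, hA⟩)) = A := by
        apply Fin.ext
        rw [hσa, Equiv.apply_symm_apply]
      have hBi : ρ (a (σ.symm ⟨B, hB⟩)) = B := by
        apply Fin.ext
        rw [hσa, Equiv.apply_symm_apply]
      have h1 : ρ.symm A = a (σ.symm ⟨A, hA⟩) := (Equiv.symm_apply_eq ρ).2 hAi.symm
      have h2 : ρ.symm B = a (σ.symm ⟨B, hB⟩) := (Equiv.symm_apply_eq ρ).2 hBi.symm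
      exact h1 ▸ h2 ▸ ha_mono hi
    · have hi := hτ _ _ hr
      have hAi : ρ (b (τ.symm ⟨(A : ℕ) - n, by have := A.isLt; omega⟩)) = A := by
        apply Fin.ext
        rw [hτb, Equiv.apply_symm_apply]
        show n + ((A : ℕ) - n) = (A : ℕ)
        omega
      have hBi : ρ (b (τ.symm ⟨(B : ℕ) - n, by have := B.isLt; omega⟩)) = B := by
        apply Fin.ext
        rw [hτb, Equiv.apply_symm_apply]
        show n + ((B : ℕ) - n) = (B : ℕ)
        omega
      have h1 : ρ.symm A = b (τ.symm ⟨(A : ℕ) - n, by have := A.isLt; omega⟩) :=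
        (Equiv.symm_apply_eq ρ).2 hAi.symm
      have h2 : ρ.symm B = b (τ.symm ⟨(B : ℕ) - n, by have := B.isLt; omega⟩) :=
        (Equiv.symm_apply_eq ρ).2 hBi.symm
      exact h1 ▸ h2 ▸ hb_mono hi
end

section
/- Let π and π' be special double posets of the same cardinality n with labellings ω and ω'. The map φ ↦ ω∘φ⁻¹∘ω'⁻¹ is a bijection between pictures from π to π' and permutations σ ∈ Sₙ such that σ is a linear extension of π and σ⁻¹ is a linear extension of π'. -/
/-- `σ` is a linear extension of the special double poset with first order `r1`
and labelling `ω` (the order isomorphism from the total second order to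
`{1,...,n}`): `σ⁻¹∘ω` is increasing from `(E,<₁)` to `{1,...,n}`. -/
def SLinExt {E : Type} {n : ℕ} (r1 : E → E → Prop) (ω : E ≃ Fin n)
    (σ : Equiv.Perm (Fin n)) : Prop :=
  ∀ a b, r1 a b → σ.symm (ω a) < σ.symm (ω b)

/-- A picture between special double posets (with second orders given by the
labellings `ω`, `ω'`). -/
def SPicture {E E' : Type} {n : ℕ} (r1 : E → E → Prop) (ω : E ≃ Fin n)
    (r1' : E' → E' → Prop) (ω' : E' ≃ Fin n) (φ : E ≃ E') : Prop :=
  (∀ a b, r1 a b → ω' (φ a) < ω' (φ b)) ∧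
  (∀ a b, r1' a b → ω (φ.symm a) < ω (φ.symm b))

/-- The map `φ ↦ ω∘φ⁻¹∘ω'⁻¹` is a bijection between pictures from `π` to `π'`
and permutations `σ` such that `σ` is a linear extension of `π` and `σ⁻¹` one
of `π'`. -/
theorem pictures_are_pairs_of_linear_extensions
    {E E' : Type} {n : ℕ} [Fintype E] [Fintype E']
    (r1 : E → E → Prop) (ω : E ≃ Fin n)
    (r1' : E' → E' → Prop) (ω' : E' ≃ Fin n)
    (h : IsStrictOrder E r1) (h' : IsStrictOrder E' r1') :
    Set.BijOn
      (fun φ : E ≃ E' => (ω'.symm.trans (φ.symm.trans ω) : Equiv.Perm (Fin n)))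
      {φ | SPicture r1 ω r1' ω' φ}
      {σ | SLinExt r1 ω σ ∧ SLinExt r1' ω' σ.symm} := by
  refine ⟨?_, ?_, ?_⟩
  · rintro φ ⟨h1, h2⟩
    constructor
    · intro a b hab; simpa using h1 a b hab
    · intro a b hab; simpa using h2 a b hab
  · intro φ _ ψ _ hEq
    have hs : ∀ x, φ.symm x = ψ.symm x := by
      intro x
      have := congrArg (fun σ : Equiv.Perm (Fin n) => ω.symm (σ (ω' x))) hEq
      simpa using this
    ext x
    have := hs (ψ x)
    simp only [Equiv.symm_apply_apply] at this
    have h2 : φ (φ.symm (ψ x)) = φ x := congrArg φ this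
    simpa using h2.symm
  · rintro σ ⟨h1, h2⟩
    refine ⟨ω.trans (σ.symm.trans ω'.symm), ⟨?_, ?_⟩, ?_⟩
    · intro a b hab; simpa using h1 a b hab
    · intro a b hab; simpa using h2 a b hab
    · ext x; simp
end

section
/- The number of pictures between two special double posets π and π' equals the number of permutations σ such that σ is a linear extension of π and σ⁻¹ is a linear extension of π'. Consequently, the map L sending a special double poset to the formal sum of its linear extensions is an isometry with respect to the Zelevinsky scalar product on double posets (counting pictures) and the Jöllenbeck scalar product on ℤS (with (σ,τ) = 1 if σ = τ⁻¹ and 0 otherwise). -/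
/-- The number of pictures between two special double posets `π`, `π'` equals
the number of permutations `σ` that are linear extensions of `π` with `σ⁻¹` a
linear extension of `π'`; equivalently (Jöllenbeck pairing), it equals the
number of pairs `(σ, τ)` of linear extensions of `π` and `π'` with `σ = τ⁻¹`:
`L` is an isometry. -/
theorem L_is_isometry
    {E E' : Type} {n : ℕ} [Fintype E] [Fintype E']
    (r1 : E → E → Prop) (ω : E ≃ Fin n)
    (r1' : E' → E' → Prop) (ω' : E' ≃ Fin n)
    (h : IsStrictOrder E r1) (h' : IsStrictOrder E' r1') :
    Nat.card {φ : E ≃ E' // SPicture r1 ω r1' ω' φ} =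
      Nat.card {σ : Equiv.Perm (Fin n) //
        SLinExt r1 ω σ ∧ SLinExt r1' ω' σ⁻¹} ∧
    Nat.card {φ : E ≃ E' // SPicture r1 ω r1' ω' φ} =
      Nat.card {q : Equiv.Perm (Fin n) × Equiv.Perm (Fin n) //
        SLinExt r1 ω q.1 ∧ SLinExt r1' ω' q.2 ∧ q.1 = q.2⁻¹} := by
  have e1 : {φ : E ≃ E' // SPicture r1 ω r1' ω' φ} ≃
      {σ : Equiv.Perm (Fin n) // SLinExt r1 ω σ ∧ SLinExt r1' ω' σ⁻¹} := by
    refine ⟨fun ⟨φ, hφ⟩ => ⟨ω'.symm.trans (φ.symm.trans ω), ?_, ?_⟩,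
      fun ⟨σ, hσ⟩ => ⟨ω.trans ((σ : Equiv.Perm (Fin n)).symm.trans ω'.symm), ?_, ?_⟩,
      ?_, ?_⟩
    · intro a b hab
      simpa using hφ.1 a b hab
    · intro a b hab
      simpa [Equiv.Perm.inv_def] using hφ.2 a b hab
    · intro a b hab
      simpa using hσ.1 a b hab
    · intro a b hab
      have := hσ.2 a b hab
      simpa [Equiv.Perm.inv_def] using this
    · rintro ⟨φ, hφ⟩
      ext a
      simp
    · rintro ⟨σ, hσ⟩
      ext a
      simp
  have e2 : {σ : Equiv.Perm (Fin n) // SLinExt r1 ω σ ∧ SLinExt r1' ω' σ⁻¹} ≃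
      {q : Equiv.Perm (Fin n) × Equiv.Perm (Fin n) //
        SLinExt r1 ω q.1 ∧ SLinExt r1' ω' q.2 ∧ q.1 = q.2⁻¹} := by
    refine ⟨fun ⟨σ, hσ⟩ => ⟨(σ, σ⁻¹), hσ.1, by simpa using hσ.2, by simp⟩,
      fun ⟨q, hq⟩ => ⟨q.1, hq.1, by rw [hq.2.2]; simpa using hq.2.1⟩, ?_, ?_⟩
    · rintro ⟨σ, hσ⟩; rfl
    · rintro ⟨⟨σ, τ⟩, h1, h2, h3⟩
      have : σ⁻¹ = τ := by simp at h3; rw [h3]; simp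
      simp [Prod.ext_iff, this]
  exact ⟨Nat.card_congr e1, (Nat.card_congr e1).trans (Nat.card_congr e2)⟩
end

section
/- Let π be a special double poset. A word w = a₁...aₙ over a totally ordered alphabet fits into π if and only if its standard permutation st(w) fits into π. -/
def Fits {E : Type} {n : ℕ} {A : Type} [LinearOrder A]
    (r1 : E → E → Prop) (ω : E ≃ Fin n) (w : Fin n → A) : Prop :=
  (∀ e e', r1 e e' → w (ω e) ≤ w (ω e')) ∧
  (∀ e e', r1 e e' → ¬ ω e < ω e' → w (ω e) < w (ω e'))

/-- `s` is the standard permutation `st(w)` of the word `w`: positions are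
numbered `1,...,n` processing occurrences of the smallest letter left to right,
then the next smallest, and so on; equivalently the ranks `s i` are ordered
lexicographically by (letter, position). -/
def IsStd {n : ℕ} {A : Type} [LinearOrder A] (w : Fin n → A)
    (s : Equiv.Perm (Fin n)) : Prop :=
  ∀ i j, s i < s j ↔ (w i < w j ∨ (w i = w j ∧ i < j))

/-- A word fits into a special double poset iff its standard permutation
(viewed as a word) does. -/
theorem fits_iff_std_fits
    {E : Type} {n : ℕ} {A : Type} [LinearOrder A] [Fintype E]
    (r1 : E → E → Prop) (ω : E ≃ Fin n) (h : IsStrictOrder E r1)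
    (w : Fin n → A) (s : Equiv.Perm (Fin n)) (hs : IsStd w s) :
    Fits r1 ω w ↔ Fits r1 ω (fun i => s i) := by
  have key : ∀ i j : Fin n, i ≠ j →
      ((w i ≤ w j ∧ (¬ i < j → w i < w j)) ↔ (s i ≤ s j ∧ (¬ i < j → s i < s j))) := by
    intro i j hij
    have hsne : s i ≠ s j := fun hh => hij (s.injective hh)
    have h1 := hs i j
    constructor
    · rintro ⟨hle, hlt⟩
      have hslt : s i < s j := by
        rcases lt_or_ge i j with hij' | hij'
        · rcases lt_or_eq_of_le hle with h' | h'
          · exact h1.mpr (Or.inl h')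
          · exact h1.mpr (Or.inr ⟨h', hij'⟩)
        · exact h1.mpr (Or.inl (hlt (not_lt.mpr hij')))
      exact ⟨hslt.le, fun _ => hslt⟩
    · rintro ⟨hle, -⟩
      have hslt : s i < s j := lt_of_le_of_ne hle hsne
      rcases h1.mp hslt with h' | ⟨h', h''⟩
      · exact ⟨h'.le, fun _ => h'⟩
      · exact ⟨h'.le, fun hn => absurd h'' hn⟩
  have hne : ∀ e e', r1 e e' → ω e ≠ ω e' := by
    intro e e' hr hh
    have he : e = e' := ω.injective hh
    subst he
    exact h.toIrrefl.irrefl e hr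
  constructor
  · rintro ⟨f1, f2⟩
    refine ⟨fun e e' hr => ?_, fun e e' hr hn => ?_⟩
    · exact ((key _ _ (hne e e' hr)).mp ⟨f1 e e' hr, fun hn => f2 e e' hr hn⟩).1
    · exact ((key _ _ (hne e e' hr)).mp ⟨f1 e e' hr, fun hn => f2 e e' hr hn⟩).2 hn
  · rintro ⟨f1, f2⟩
    refine ⟨fun e e' hr => ?_, fun e e' hr hn => ?_⟩
    · exact ((key _ _ (hne e e' hr)).mpr ⟨f1 e e' hr, fun hn => f2 e e' hr hn⟩).1
    · exact ((key _ _ (hne e e' hr)).mpr ⟨f1 e e' hr, fun hn => f2 e e' hr hn⟩).2 hn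
end

section
/- Let w be a word on the positive integers of weight equal to the partition ν = (ν₁ > ... > ν_k > 0) of n, let u be the complement of w, let w₀ = n (n−1) ... 1 be the longest element of Sₙ, and let γ be the longest element of the Young subgroup S_{ν₁} × ... × S_{ν_k}. Then st(u) = w₀ ∘ γ ∘ st(w). -/
/-- Standardizations are unique. -/
lemma isStd_unique {n : ℕ} {A : Type} [LinearOrder A] {w : Fin n → A}
    {s t : Equiv.Perm (Fin n)} (hs : IsStd w s) (ht : IsStd w t) : s = t := by
  have h : ∀ a b : Fin n, s a < s b ↔ t a < t b :=
    fun a b => (hs a b).trans (ht a b).symm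
  have hlt : ∀ a b : Fin n, t (s.symm a) < t (s.symm b) ↔ a < b := by
    intro a b
    rw [← h]
    simp
  let e : Fin n ≃o Fin n :=
    { toEquiv := s.symm.trans t
      map_rel_iff' := @fun a b => by
        simp only [Equiv.trans_apply]
        rw [← not_lt, ← not_lt, hlt] }
  have he : ∀ a, t (s.symm a) = a := by
    intro a
    have := congrArg (fun f : Fin n ≃o Fin n => f a)
      (Subsingleton.elim e (OrderIso.refl (Fin n)))
    simpa [e] using this
  apply Equiv.ext
  intro i
  have := he (s i)
  simpa using this.symm

/-- Let `w` be a word with letters `1,...,k` (encoded as `Fin k`) of weight the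
strict partition `ν = (ν₁ > ... > ν_k > 0)` of `n`, `u` its complement
(letter `j ↦ k+1-j`, i.e. `Fin.rev`), `w₀` the longest element of `Sₙ`
(`Fin.revPerm`) and `γ` the longest element of the Young subgroup
`S_{ν₁} × ... × S_{ν_k}` (reversing each consecutive block `[B j, B (j+1))`,
where `B j = ν₁ + ... + ν_j`).  Then `st(u) = w₀ ∘ γ ∘ st(w)`. -/
theorem std_of_complement
    {n k : ℕ} (ν : Fin k → ℕ)
    (hanti : ∀ i j : Fin k, i < j → ν j < ν i) (hpos : ∀ i, 0 < ν i)
    (hsum : ∑ i, ν i = n)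
    (w : Fin n → Fin k)
    (hweight : ∀ j, (Finset.univ.filter fun i => w i = j).card = ν j)
    (B : ℕ → ℕ)
    (hB : ∀ m, B m = ∑ i ∈ Finset.univ.filter (fun i : Fin k => (i : ℕ) < m), ν i)
    (γ : Equiv.Perm (Fin n))
    (hγ : ∀ (m : Fin n) (j : ℕ), j < k → B j ≤ (m : ℕ) → (m : ℕ) < B (j + 1) →
      (γ m : ℕ) = B j + B (j + 1) - 1 - (m : ℕ))
    (sw su : Equiv.Perm (Fin n))
    (hsw : IsStd w sw) (hsu : IsStd (fun i => (w i).rev) su) :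
    su = sw.trans (γ.trans Fin.revPerm) := by
  classical
  -- B is monotone
  have hBmono : ∀ a b : ℕ, a ≤ b → B a ≤ B b := by
    intro a b hab
    rw [hB, hB]
    apply Finset.sum_le_sum_of_subset
    intro x hx
    simp only [Finset.mem_filter, Finset.mem_univ, true_and] at hx ⊢
    omega
  -- B (c+1) = B c + ν c
  have hBsucc : ∀ c : Fin k, B ((c : ℕ) + 1) = B (c : ℕ) + ν c := by
    intro c
    rw [hB, hB]
    have hins : (Finset.univ.filter fun i : Fin k => (i : ℕ) < (c : ℕ) + 1) =
        insert c (Finset.univ.filter fun i : Fin k => (i : ℕ) < (c : ℕ)) := by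
      ext x
      simp only [Finset.mem_filter, Finset.mem_univ, true_and, Finset.mem_insert]
      constructor
      · intro hx
        rcases Nat.lt_succ_iff_lt_or_eq.mp hx with h | h
        · exact Or.inr h
        · exact Or.inl (Fin.ext h)
      · rintro (rfl | h)
        · omega
        · omega
    rw [hins, Finset.sum_insert (by simp)]
    ring
  -- counting letters strictly below c
  have hcount : ∀ c : Fin k,
      (Finset.univ.filter fun m => w m < c).card = B (c : ℕ) := by
    intro c
    rw [hB]
    have hun : (Finset.univ.filter fun m => w m < c)
        = (Finset.univ.filter fun i : Fin k => (i : ℕ) < (c : ℕ)).biUnion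
            (fun j => Finset.univ.filter fun m => w m = j) := by
      ext m
      simp only [Finset.mem_filter, Finset.mem_univ, true_and, Finset.mem_biUnion]
      constructor
      · intro hm
        exact ⟨w m, hm, rfl⟩
      · rintro ⟨j, hj, rfl⟩
        exact hj
    rw [hun, Finset.card_biUnion]
    · exact Finset.sum_congr rfl fun j _ => hweight j
    · intro a _ b _ hab
      rw [Function.onFun, Finset.disjoint_left]
      intro m hma hmb
      simp only [Finset.mem_filter, Finset.mem_univ, true_and] at hma hmb
      exact hab (hma ▸ hmb ▸ rfl)
  -- counting letters at most c
  have hcount' : ∀ c : Fin k,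
      (Finset.univ.filter fun m => w m ≤ c).card = B ((c : ℕ) + 1) := by
    intro c
    have hsplit : (Finset.univ.filter fun m => w m ≤ c)
        = (Finset.univ.filter fun m => w m < c) ∪
          (Finset.univ.filter fun m => w m = c) := by
      ext m
      simp only [Finset.mem_filter, Finset.mem_univ, true_and, Finset.mem_union]
      exact le_iff_lt_or_eq
    rw [hsplit, Finset.card_union_of_disjoint, hcount, hweight, hBsucc]
    rw [Finset.disjoint_left]
    intro m hma hmb
    simp only [Finset.mem_filter, Finset.mem_univ, true_and] at hma hmb
    exact absurd (hmb ▸ hma) (lt_irrefl c)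
  -- the value of sw i as a cardinality
  have hval : ∀ i : Fin n,
      (sw i : ℕ) = (Finset.univ.filter fun m => sw m < sw i).card := by
    intro i
    have h1 : (Finset.univ.filter fun m => sw m < sw i).card
        = (Finset.univ.filter fun a : Fin n => a < sw i).card := by
      apply Finset.card_equiv sw
      intro m
      simp
    rw [h1]
    have : (Finset.univ.filter fun a : Fin n => a < sw i) = Finset.Iio (sw i) := by
      ext a; simp
    rw [this, Fin.card_Iio]
  -- block bounds for sw
  have hlow : ∀ i : Fin n, B (w i : ℕ) ≤ (sw i : ℕ) := by
    intro i
    rw [hval i, ← hcount (w i)]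
    apply Finset.card_le_card
    intro m hm
    simp only [Finset.mem_filter, Finset.mem_univ, true_and] at hm ⊢
    exact (hsw m i).mpr (Or.inl hm)
  have hhigh : ∀ i : Fin n, (sw i : ℕ) < B ((w i : ℕ) + 1) := by
    intro i
    rw [hval i, ← hcount' (w i)]
    apply Finset.card_lt_card
    constructor
    · intro m hm
      simp only [Finset.mem_filter, Finset.mem_univ, true_and] at hm ⊢
      rcases (hsw m i).mp hm with h | h
      · exact le_of_lt h
      · exact le_of_eq h.1
    · intro hcon
      have := hcon (by simp : i ∈ (Finset.univ.filter fun m => w m ≤ w i))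
      simp only [Finset.mem_filter, Finset.mem_univ, true_and] at this
      exact lt_irrefl _ this
  -- value of γ on sw i
  have hγval : ∀ i : Fin n,
      (γ (sw i) : ℕ) = B (w i : ℕ) + B ((w i : ℕ) + 1) - 1 - (sw i : ℕ) :=
    fun i => hγ (sw i) (w i : ℕ) (w i).isLt (hlow i) (hhigh i)
  -- letters strictly ordered ⇒ γ∘sw strictly ordered
  have cross : ∀ a b : Fin n, w a < w b → (γ (sw a) : ℕ) < (γ (sw b) : ℕ) := by
    intro a b hab
    have h1 := hlow a
    have h2 := hhigh a
    have h3 := hlow b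
    have h4 := hhigh b
    have h5 := hγval a
    have h6 := hγval b
    have hm : B ((w a : ℕ) + 1) ≤ B (w b : ℕ) := hBmono _ _ hab
    omega
  -- the composite is a standardization of the complement
  have key : IsStd (fun i => (w i).rev) (sw.trans (γ.trans Fin.revPerm)) := by
    intro i j
    simp only [Equiv.trans_apply, Fin.revPerm_apply]
    rw [Fin.rev_lt_rev, Fin.rev_lt_rev, Fin.rev_inj]
    rcases lt_trichotomy (w i) (w j) with hlt | heq | hgt
    · have hc := cross i j hlt
      constructor
      · intro hcon
        exact absurd (Fin.lt_def.mp hcon) (by omega)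
      · rintro (h | ⟨h, -⟩)
        · exact absurd h (not_lt.mpr hlt.le)
        · exact absurd h (ne_of_lt hlt)
    · have hij' : (sw i : ℕ) < (sw j : ℕ) ↔ i < j := by
        rw [← Fin.lt_def, hsw i j]
        simp [heq]
      have h5 := hγval i
      have h6 := hγval j
      have h1 := hlow i
      have h2 := hhigh i
      have h3 := hlow j
      have h4 := hhigh j
      rw [heq] at h5 h1 h2
      constructor
      · intro h
        have h' : (γ (sw j) : ℕ) < (γ (sw i) : ℕ) := h
        have hs : (sw i : ℕ) < (sw j : ℕ) := by omega
        exact Or.inr ⟨heq, hij'.mp hs⟩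
      · rintro (hcon | ⟨-, hij⟩)
        · exact absurd hcon (by rw [heq]; exact lt_irrefl _)
        · have hs : (sw i : ℕ) < (sw j : ℕ) := hij'.mpr hij
          show (γ (sw j) : ℕ) < (γ (sw i) : ℕ)
          omega
    · simp only [hgt, true_or, iff_true]
      exact Fin.lt_def.mpr (cross j i hgt)
  exact isStd_unique hsu key
end

section
/- Let w be a word on the positive integers of weight equal to the partition ν = (ν₁ > ... > ν_k > 0) of n, let v be the mirror image of w, let w₀ be the longest element of Sₙ and γ the longest element of the Young subgroup S_{ν₁} × ... × S_{ν_k}. Then st(v) = γ ∘ st(w) ∘ w₀. -/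
/-- With the notation of the previous statement, if `v` is the mirror image of
`w` then `st(v) = γ ∘ st(w) ∘ w₀`. -/
theorem std_of_mirror
    {n k : ℕ} (ν : Fin k → ℕ)
    (hanti : ∀ i j : Fin k, i < j → ν j < ν i) (hpos : ∀ i, 0 < ν i)
    (hsum : ∑ i, ν i = n)
    (w : Fin n → Fin k)
    (hweight : ∀ j, (Finset.univ.filter fun i => w i = j).card = ν j)
    (B : ℕ → ℕ)
    (hB : ∀ m, B m = ∑ i ∈ Finset.univ.filter (fun i : Fin k => (i : ℕ) < m), ν i)
    (γ : Equiv.Perm (Fin n))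
    (hγ : ∀ (m : Fin n) (j : ℕ), j < k → B j ≤ (m : ℕ) → (m : ℕ) < B (j + 1) →
      (γ m : ℕ) = B j + B (j + 1) - 1 - (m : ℕ))
    (sw sv : Equiv.Perm (Fin n))
    (hsw : IsStd w sw) (hsv : IsStd (fun i => w (Fin.rev i)) sv) :
    sv = Fin.revPerm.trans (sw.trans γ) := by
  -- B is monotone
  have Bmono : ∀ a b : ℕ, a ≤ b → B a ≤ B b := by
    intro a b hab
    rw [hB, hB]
    exact Finset.sum_le_sum_of_subset (by
      intro i hi
      simp only [Finset.mem_filter, Finset.mem_univ, true_and] at hi ⊢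
      omega)
  -- B step
  have Bstep : ∀ j : Fin k, B ((j : ℕ) + 1) = B (j : ℕ) + ν j := by
    intro j
    rw [hB, hB]
    have hset : (Finset.univ.filter fun i : Fin k => (i : ℕ) < (j : ℕ) + 1)
        = insert j (Finset.univ.filter fun i : Fin k => (i : ℕ) < (j : ℕ)) := by
      ext i
      simp only [Finset.mem_filter, Finset.mem_univ, true_and, Finset.mem_insert]
      constructor
      · intro h
        rcases Nat.lt_succ_iff_lt_or_eq.mp h with h | h
        · exact Or.inr h
        · exact Or.inl (Fin.ext h)
      · rintro (rfl | h) <;> omega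
    rw [hset, Finset.sum_insert (by simp)]
    ring
  -- Block fact: sw a lies in the block of letter w a
  have block : ∀ a : Fin n, B (w a : ℕ) ≤ (sw a : ℕ) ∧ (sw a : ℕ) < B ((w a : ℕ) + 1) := by
    intro a
    have hcard : (sw a : ℕ) = (Finset.univ.filter fun b => sw b < sw a).card := by
      have h1 : (Finset.univ.filter fun b : Fin n => sw b < sw a)
          = (Finset.univ.filter fun c : Fin n => c < sw a).map sw.symm.toEmbedding := by
        ext b
        simp only [Finset.mem_filter, Finset.mem_univ, true_and, Finset.mem_map,
          Equiv.coe_toEmbedding]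
        constructor
        · intro h; exact ⟨sw b, h, by simp⟩
        · rintro ⟨c, hc, rfl⟩; simpa using hc
      rw [h1, Finset.card_map,
        show (Finset.univ.filter fun c : Fin n => c < sw a) = Finset.Iio (sw a) by
          ext c; simp, Fin.card_Iio]
    have hsplit : (Finset.univ.filter fun b => sw b < sw a)
        = (Finset.univ.filter fun b => w b < w a)
          ∪ (Finset.univ.filter fun b => w b = w a ∧ b < a) := by
      ext b
      simp only [Finset.mem_filter, Finset.mem_univ, true_and, Finset.mem_union, hsw b a]
    have hdisj : Disjoint (Finset.univ.filter fun b => w b < w a)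
        (Finset.univ.filter fun b => w b = w a ∧ b < a) := by
      rw [Finset.disjoint_left]
      intro b hb hb'
      simp only [Finset.mem_filter, Finset.mem_univ, true_and] at hb hb'
      exact absurd (hb'.1 ▸ hb) (lt_irrefl _)
    have hc1 : (Finset.univ.filter fun b => w b < w a).card = B (w a : ℕ) := by
      rw [Finset.card_eq_sum_card_fiberwise
        (f := w) (t := Finset.univ.filter fun j : Fin k => j < w a)
        (by intro x hx; simp only [Finset.mem_coe, Finset.mem_filter, Finset.mem_univ, true_and] at hx ⊢
            exact hx)]
      rw [hB]
      have hteq : (Finset.univ.filter fun j : Fin k => j < w a)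
          = Finset.univ.filter fun i : Fin k => (i : ℕ) < (w a : ℕ) := by
        ext i
        simp only [Finset.mem_filter, Finset.mem_univ, true_and, Fin.lt_def]
      rw [← hteq]
      apply Finset.sum_congr rfl
      intro j hj
      simp only [Finset.mem_filter, Finset.mem_univ, true_and] at hj
      rw [← hweight j]
      congr 1
      ext b
      simp only [Finset.mem_filter, Finset.mem_univ, true_and]
      constructor
      · rintro ⟨_, h⟩; exact h
      · rintro rfl; exact ⟨hj, rfl⟩
    have hc2 : (Finset.univ.filter fun b => w b = w a ∧ b < a).card < ν (w a) := by
      have hsub : (Finset.univ.filter fun b => w b = w a ∧ b < a)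
          ⊆ (Finset.univ.filter fun b => w b = w a).erase a := by
        intro b hb
        simp only [Finset.mem_filter, Finset.mem_univ, true_and] at hb
        simp only [Finset.mem_erase, Finset.mem_filter, Finset.mem_univ, true_and]
        exact ⟨ne_of_lt hb.2, hb.1⟩
      calc (Finset.univ.filter fun b => w b = w a ∧ b < a).card
          ≤ ((Finset.univ.filter fun b => w b = w a).erase a).card := Finset.card_le_card hsub
        _ ≤ (Finset.univ.filter fun b => w b = w a).card - 1 := by
            rw [Finset.card_erase_of_mem (by simp)]
        _ < ν (w a) := by rw [hweight]; have := hpos (w a); omega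
    have hcards := Finset.card_union_of_disjoint hdisj
    rw [← hsplit] at hcards
    rw [hcards, hc1] at hcard
    constructor
    · omega
    · rw [Bstep (w a)]; omega
  -- the candidate permutation
  set T : Equiv.Perm (Fin n) := Fin.revPerm.trans (sw.trans γ) with hT
  have hTapp : ∀ i : Fin n, T i = γ (sw i.rev) := fun i => rfl
  -- γ facts on a block
  have hγblock : ∀ (m : Fin n) (j : ℕ), j < k → B j ≤ (m : ℕ) → (m : ℕ) < B (j + 1) →
      B j ≤ (γ m : ℕ) ∧ (γ m : ℕ) < B (j + 1) := by
    intro m j hj h1 h2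
    rw [hγ m j hj h1 h2]
    omega
  apply isStd_unique hsv
  intro i j
  rw [hTapp, hTapp]
  show γ (sw i.rev) < γ (sw j.rev) ↔ (w i.rev < w j.rev ∨ (w i.rev = w j.rev ∧ i < j))
  set a := i.rev with ha
  set b := j.rev with hb
  have hij : i < j ↔ b < a := by
    rw [show i = a.rev from (Fin.rev_rev i).symm, show j = b.rev from (Fin.rev_rev j).symm,
      Fin.rev_lt_rev]
  obtain ⟨ha1, ha2⟩ := block a
  obtain ⟨hb1, hb2⟩ := block b
  rcases lt_trichotomy (w a) (w b) with hlt | heq | hgt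
  · -- w a < w b : both sides hold
    have hL : γ (sw a) < γ (sw b) := by
      have g1 := hγblock (sw a) (w a : ℕ) (w a).isLt ha1 ha2
      have g2 := hγblock (sw b) (w b : ℕ) (w b).isLt hb1 hb2
      have hstep : B ((w a : ℕ) + 1) ≤ B (w b : ℕ) := Bmono _ _ (by exact hlt)
      have : (γ (sw a) : ℕ) < (γ (sw b) : ℕ) := by omega
      exact this
    exact iff_of_true hL (Or.inl hlt)
  · -- equal letters: same block, γ reverses
    by_cases hab : a = b
    · have hij' : i = j := by
        have h' := hab
        rw [ha, hb, Fin.rev_inj] at h'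
        exact h'
      subst hij'
      exact iff_of_false (lt_irrefl _) (by
        rintro (h | ⟨_, h⟩) <;> exact absurd h (lt_irrefl _))
    · have hiff : γ (sw a) < γ (sw b) ↔ sw b < sw a := by
        have e1 := hγ (sw a) (w a : ℕ) (w a).isLt ha1 ha2
        have e2 := hγ (sw b) (w a : ℕ) (w a).isLt (heq ▸ hb1) (heq ▸ hb2)
        rw [Fin.lt_def, Fin.lt_def, e1, e2]
        have hne : (sw a : ℕ) ≠ (sw b : ℕ) := fun h => hab (sw.injective (Fin.ext h))
        omega
      rw [hiff, hsw b a, hij, heq]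
  · -- w b < w a : both sides fail
    have hL : γ (sw b) < γ (sw a) := by
      have g1 := hγblock (sw a) (w a : ℕ) (w a).isLt ha1 ha2
      have g2 := hγblock (sw b) (w b : ℕ) (w b).isLt hb1 hb2
      have hstep : B ((w b : ℕ) + 1) ≤ B (w a : ℕ) := Bmono _ _ (by exact hgt)
      have : (γ (sw b) : ℕ) < (γ (sw a) : ℕ) := by omega
      exact this
    exact iff_of_false (fun h => absurd (h.trans hL) (lt_irrefl _)) (by
      rintro (h | ⟨h, _⟩)
      · exact absurd (h.trans hgt) (lt_irrefl _)
      · exact absurd (h ▸ hgt) (lt_irrefl _))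
end

section
/- Let π be a special double poset of cardinality n and ν a partition of n. The number of pictures from π to the double poset π_ν equals the number of lattice permutations of weight ν whose complements fit into π (an extension of the Littlewood–Richardson rule). -/
/-- First order of the double poset `π_ν`: the componentwise (natural) order of
`ℕ × ℕ` on the cells `(j, c)` (`j` the row, `c` the column) of the Ferrers
diagram of `ν`. -/
def cellRel1 {k : ℕ} (ν : Fin k → ℕ) (c c' : Σ j : Fin k, Fin (ν j)) : Prop :=
  ((c.1 : ℕ) ≤ (c'.1 : ℕ) ∧ (c.2 : ℕ) ≤ (c'.2 : ℕ)) ∧ c ≠ c'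

/-- Second order of `π_ν`: `(x,y) <₂ (x',y')` iff `y > y'`, or `y = y'` and
`x < x'` (reading-word order). -/
def cellRel2 {k : ℕ} (ν : Fin k → ℕ) (c c' : Σ j : Fin k, Fin (ν j)) : Prop :=
  (c'.1 : ℕ) < (c.1 : ℕ) ∨ (c.1 = c'.1 ∧ (c.2 : ℕ) < (c'.2 : ℕ))

open Finset

namespace LR

variable {E : Type} {n k : ℕ}

/-- number of occurrences of the letter `w i` strictly before position `i` -/
def cnt (w : Fin n → Fin k) (i : Fin n) : ℕ :=
  (Finset.univ.filter fun i' : Fin n => i' < i ∧ w i' = w i).card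

lemma cnt_lt_of_weight {ν : Fin k → ℕ} {w : Fin n → Fin k}
    (hw : ∀ j, (Finset.univ.filter fun i => w i = j).card = ν j) (i : Fin n) :
    cnt w i < ν (w i) := by
  rw [← hw (w i)]
  apply Finset.card_lt_card
  constructor
  · intro a ha
    simp only [mem_filter, mem_univ, true_and] at ha ⊢
    exact ha.2
  · intro hsub
    have := hsub (by simp : i ∈ Finset.univ.filter fun i' => w i' = w i)
    simp only [mem_filter, mem_univ, true_and] at this
    exact lt_irrefl i this.1

lemma cnt_lt_cnt {w : Fin n → Fin k} {i i' : Fin n} (h : i < i') (hww : w i = w i') :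
    cnt w i < cnt w i' := by
  apply Finset.card_lt_card
  constructor
  · intro a ha
    simp only [mem_filter, mem_univ, true_and] at ha ⊢
    exact ⟨ha.1.trans h, ha.2.trans (hww)⟩
  · intro hsub
    have := hsub (by simp [h, hww] : i ∈ Finset.univ.filter fun a => a < i' ∧ w a = w i')
    simp only [mem_filter, mem_univ, true_and] at this
    exact lt_irrefl i this.1

/-- lattice condition chained to non-consecutive rows. -/
lemma lattice_chain {w : Fin n → Fin k}
    (hlat : ∀ (m : ℕ) (j j' : Fin k), (j' : ℕ) = (j : ℕ) + 1 →
      (Finset.univ.filter fun i : Fin n => (i : ℕ) < m ∧ w i = j').card ≤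
        (Finset.univ.filter fun i : Fin n => (i : ℕ) < m ∧ w i = j).card)
    (m : ℕ) :
    ∀ (d : ℕ) (j j' : Fin k), (j' : ℕ) = (j : ℕ) + d →
      (Finset.univ.filter fun i : Fin n => (i : ℕ) < m ∧ w i = j').card ≤
        (Finset.univ.filter fun i : Fin n => (i : ℕ) < m ∧ w i = j).card := by
  intro d
  induction d with
  | zero =>
    intro j j' h
    have : j' = j := Fin.ext (by omega)
    subst this; exact le_refl _
  | succ d ih =>
    intro j j' h
    have hjm : (j : ℕ) + d < k := by have := j'.isLt; omega
    have h1 := hlat m ⟨(j : ℕ) + d, hjm⟩ j' (by omega)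
    exact h1.trans (ih j ⟨(j : ℕ) + d, hjm⟩ rfl)

section Backward

variable (ν : Fin k → ℕ) (ω : E ≃ Fin n) (w : Fin n → Fin k)
  (hw : ∀ j, (Finset.univ.filter fun i => w i = j).card = ν j)

/-- the cell of element `e`: row `w (ω e)`, column the count of previous
occurrences of that letter. -/
def toCell (e : E) : Σ j : Fin k, Fin (ν j) :=
  ⟨w (ω e), ⟨cnt w (ω e), cnt_lt_of_weight hw (ω e)⟩⟩

lemma toCell_injective : Function.Injective (toCell ν ω w hw) := by
  intro a b hab
  have hfst : w (ω a) = w (ω b) := congrArg Sigma.fst hab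
  have hsnd : cnt w (ω a) = cnt w (ω b) := congrArg (fun x => (x.2 : ℕ)) hab
  by_contra hne
  have hom : ω a ≠ ω b := fun h => hne (ω.injective h)
  rcases lt_or_gt_of_ne hom with h | h
  · exact absurd hsnd (Nat.ne_of_lt (cnt_lt_cnt h hfst))
  · exact absurd hsnd.symm (Nat.ne_of_lt (cnt_lt_cnt h hfst.symm))

lemma toCell_bijective [Fintype E] (hsum : ∑ i, ν i = n) :
    Function.Bijective (toCell ν ω w hw) := by
  rw [Fintype.bijective_iff_injective_and_card]
  refine ⟨toCell_injective ν ω w hw, ?_⟩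
  rw [Fintype.card_congr ω, Fintype.card_sigma]
  simp [hsum]

end Backward


section BackwardProps

variable (ν : Fin k → ℕ) (ω : E ≃ Fin n) (w : Fin n → Fin k)
  (hw : ∀ j, (Finset.univ.filter fun i => w i = j).card = ν j)

lemma count_succ_eq {i' : Fin n} :
    (Finset.univ.filter fun a : Fin n => (a : ℕ) < (i' : ℕ) + 1 ∧ w a = w i').card
      = cnt w i' + 1 := by
  have : (Finset.univ.filter fun a : Fin n => (a : ℕ) < (i' : ℕ) + 1 ∧ w a = w i')
      = insert i' (Finset.univ.filter fun a : Fin n => a < i' ∧ w a = w i') := by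
    ext a
    simp only [mem_filter, mem_univ, true_and, mem_insert]
    constructor
    · rintro ⟨h1, h2⟩
      rcases eq_or_lt_of_le (Nat.lt_succ_iff.mp h1) with h | h
      · exact Or.inl (Fin.ext h)
      · exact Or.inr ⟨h, h2⟩
    · rintro (rfl | ⟨h1, h2⟩)
      · exact ⟨Nat.lt_succ_self _, rfl⟩
      · exact ⟨Nat.lt_succ_of_lt h1, h2⟩
  rw [this, Finset.card_insert_of_notMem (by simp)]
  rfl

lemma count_le_cnt {i i' : Fin n} (h : i' < i) {j : Fin k} (hj : w i = j) :
    (Finset.univ.filter fun a : Fin n => (a : ℕ) < (i' : ℕ) + 1 ∧ w a = j).card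
      ≤ cnt w i := by
  apply Finset.card_le_card
  intro a ha
  simp only [mem_filter, mem_univ, true_and] at ha ⊢
  refine ⟨?_, ha.2.trans hj.symm⟩
  have h2 : (i' : ℕ) < (i : ℕ) := h
  have := ha.1
  omega

/-- Backward direction, first picture property. -/
lemma toCell_rel2 (r1 : E → E → Prop)
    (hfit : Fits r1 ω (fun i => (w i).rev)) :
    ∀ a b, r1 a b → cellRel2 ν (toCell ν ω w hw a) (toCell ν ω w hw b) := by
  intro a b hr
  have h1 : w (ω b) ≤ w (ω a) := Fin.rev_le_rev.mp (hfit.1 a b hr)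
  rcases lt_or_eq_of_le h1 with h | h
  · exact Or.inl h
  · right
    have hab : ω a < ω b := by
      by_contra hno
      have hlt : w (ω b) < w (ω a) := Fin.rev_lt_rev.mp (by simpa using hfit.2 a b hr hno)
      exact absurd h (ne_of_lt hlt)
    refine ⟨h.symm, ?_⟩
    exact cnt_lt_cnt hab h.symm

/-- Backward direction, second picture property. -/
lemma toCell_rel1 [Fintype E] (hsum : ∑ i, ν i = n)
    (hlat : ∀ (m : ℕ) (j j' : Fin k), (j' : ℕ) = (j : ℕ) + 1 →
      (Finset.univ.filter fun i : Fin n => (i : ℕ) < m ∧ w i = j').card ≤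
        (Finset.univ.filter fun i : Fin n => (i : ℕ) < m ∧ w i = j).card)
    (c c' : Σ j : Fin k, Fin (ν j)) (h : cellRel1 ν c c')
    {e e' : E} (he : toCell ν ω w hw e = c) (he' : toCell ν ω w hw e' = c') :
    ω e < ω e' := by
  obtain ⟨⟨hfst, hsnd⟩, hne⟩ := h
  have hwe : w (ω e) = c.1 := congrArg Sigma.fst he
  have hwe' : w (ω e') = c'.1 := congrArg Sigma.fst he'
  have hce : cnt w (ω e) = (c.2 : ℕ) := congrArg (fun x => (x.2 : ℕ)) he
  have hce' : cnt w (ω e') = (c'.2 : ℕ) := congrArg (fun x => (x.2 : ℕ)) he'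
  have hnee : ω e ≠ ω e' := by
    intro hh
    apply hne
    rw [← he, ← he', ω.injective hh]
  rcases lt_or_gt_of_ne hnee with h | h
  · exact h
  exfalso
  rcases lt_or_eq_of_le hfst with hlt | heq
  · -- c.1 < c'.1 in value; use lattice chain with m = (ω e') + 1
    have hchain := lattice_chain hlat ((ω e' : ℕ) + 1) ((c'.1 : ℕ) - (c.1 : ℕ))
      c.1 c'.1 (by omega)
    have hA := count_succ_eq w (i' := ω e')
    rw [hwe', hce'] at hA
    have hB := count_le_cnt w h hwe
    rw [hce] at hB
    omega
  · -- rows equal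
    have hww : w (ω e') = w (ω e) := by
      rw [hwe, hwe']; exact (Fin.ext heq).symm
    have := cnt_lt_cnt h hww
    omega

end BackwardProps


section Forward

variable (ν : Fin k → ℕ) (ω : E ≃ Fin n) (φ : E ≃ Σ j : Fin k, Fin (ν j))

/-- word of the picture: row indices read in label order. -/
def wd (i : Fin n) : Fin k := (φ (ω.symm i)).1

/-- the label of the cell `(j, c)`. -/
def lab (j : Fin k) (c : Fin (ν j)) : Fin n := ω (φ.symm ⟨j, c⟩)

variable (hpic1 : ∀ c c', cellRel1 ν c c' → ω (φ.symm c) < ω (φ.symm c'))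

include hpic1

lemma lab_strictMono (j : Fin k) : StrictMono (lab ν ω φ j) := by
  intro c c' hcc
  apply hpic1
  refine ⟨⟨le_refl _, le_of_lt hcc⟩, ?_⟩
  intro hh
  have : c = c' := by
    have h2 := (Sigma.mk.inj_iff.mp hh).2
    exact eq_of_heq h2
  exact absurd this (ne_of_lt hcc)

lemma wd_weight (j : Fin k) :
    (Finset.univ.filter fun i => wd ν ω φ i = j).card = ν j := by
  have h : (Finset.univ : Finset (Fin (ν j))).card
      = (Finset.univ.filter fun i => wd ν ω φ i = j).card := by
    apply Finset.card_bij (fun c _ => lab ν ω φ j c)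
    · intro c _
      simp only [mem_filter, mem_univ, true_and]
      simp [wd, lab]
    · intro c _ c' _ h
      exact (lab_strictMono ν ω φ hpic1 j).injective h
    · intro b hb
      simp only [mem_filter, mem_univ, true_and] at hb
      simp only [wd] at hb
      rcases hc : φ (ω.symm b) with ⟨j0, c0⟩
      rw [hc] at hb
      subst hb
      refine ⟨c0, mem_univ _, ?_⟩
      rw [lab, ← hc]
      simp
  simpa using h.symm

lemma wd_colcnt (e : E) : cnt (wd ν ω φ) (ω e) = ((φ e).2 : ℕ) := by
  have hlabe : lab ν ω φ (φ e).1 (φ e).2 = ω e := by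
    rw [lab]
    simp [Sigma.eta]
  have h : (Finset.Iio (φ e).2).card
      = (Finset.univ.filter fun i' : Fin n =>
          i' < ω e ∧ wd ν ω φ i' = wd ν ω φ (ω e)).card := by
    apply Finset.card_bij (fun c _ => lab ν ω φ (φ e).1 c)
    · intro c hcmem
      simp only [Finset.mem_Iio] at hcmem
      simp only [mem_filter, mem_univ, true_and]
      constructor
      · rw [← hlabe]
        exact lab_strictMono ν ω φ hpic1 _ hcmem
      · simp [wd, lab]
    · intro c _ c' _ h
      exact (lab_strictMono ν ω φ hpic1 _).injective h
    · intro b hb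
      simp only [mem_filter, mem_univ, true_and] at hb
      obtain ⟨hblt, hbw⟩ := hb
      have hbw' : (φ (ω.symm b)).1 = (φ e).1 := by
        simpa [wd] using hbw
      rcases hc : φ (ω.symm b) with ⟨j0, c0⟩
      rw [hc] at hbw'
      subst hbw'
      have hlabb : lab ν ω φ (φ e).1 c0 = b := by
        rw [lab, ← hc]
        simp
      refine ⟨c0, ?_, hlabb⟩
      simp only [Finset.mem_Iio]
      rw [← StrictMono.lt_iff_lt (lab_strictMono ν ω φ hpic1 (φ e).1), hlabe, hlabb]
      exact hblt
  rw [cnt, ← h, Fin.card_Iio]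

lemma wd_lattice (hanti : ∀ i j : Fin k, i ≤ j → ν j ≤ ν i)
    (m : ℕ) (j j' : Fin k) (hjj : (j' : ℕ) = (j : ℕ) + 1) :
    (Finset.univ.filter fun i : Fin n => (i : ℕ) < m ∧ wd ν ω φ i = j').card ≤
      (Finset.univ.filter fun i : Fin n => (i : ℕ) < m ∧ wd ν ω φ i = j).card := by
  have hν : ν j' ≤ ν j := hanti j j' (by rw [Fin.le_def]; omega)
  set f : Fin n → Fin n := fun i =>
    if h : (φ (ω.symm i)).1 = j' then
      ω (φ.symm ⟨j, ⟨((φ (ω.symm i)).2 : ℕ), by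
        have hl := (φ (ω.symm i)).2.isLt
        exact lt_of_lt_of_le (lt_of_lt_of_eq hl (congrArg ν h)) hν⟩⟩)
    else i with hf
  have key : ∀ a : Fin n, (φ (ω.symm a)).1 = j' → f a < a := by
    intro a ha
    rw [hf]
    simp only [ha, dif_pos]
    have := hpic1 ⟨j, ⟨((φ (ω.symm a)).2 : ℕ),
      lt_of_lt_of_le (lt_of_lt_of_eq (φ (ω.symm a)).2.isLt (congrArg ν ha)) hν⟩⟩
      (φ (ω.symm a)) ?_
    · simpa using this
    · refine ⟨⟨?_, ?_⟩, ?_⟩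
      · show (j : ℕ) ≤ ((φ (ω.symm a)).1 : ℕ)
        have h2 : ((φ (ω.symm a)).1 : ℕ) = (j' : ℕ) := congrArg Fin.val ha
        omega
      · exact le_refl _
      · intro hh
        have := congrArg Sigma.fst hh
        simp only at this
        rw [this, ha] at hjj
        omega
  apply Finset.card_le_card_of_injOn f
  · intro a ha
    simp only [coe_filter, Finset.mem_coe, mem_filter, mem_univ, true_and, Set.mem_setOf_eq] at ha ⊢
    simp only [wd] at ha ⊢
    obtain ⟨ham, haw⟩ := ha
    have hfa := key a haw
    constructor
    · have : (f a : ℕ) < (a : ℕ) := hfa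
      omega
    · rw [hf]
      simp only [haw, dif_pos]
      simp
  · intro a ha b hb hab
    simp only [coe_filter, Finset.mem_coe, mem_filter, mem_univ, true_and, Set.mem_setOf_eq] at ha hb
    simp only [wd] at ha hb
    rw [hf] at hab
    simp only [ha.2, hb.2, dif_pos] at hab
    have h1 := φ.symm.injective (ω.injective hab)
    have h2 : ((φ (ω.symm a)).2 : ℕ) = ((φ (ω.symm b)).2 : ℕ) := by
      have := (Sigma.mk.inj_iff.mp h1).2
      have := congrArg Fin.val (eq_of_heq this)
      simpa using this
    have h3 : φ (ω.symm a) = φ (ω.symm b) := by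
      rcases hca : φ (ω.symm a) with ⟨ja, ca⟩
      rcases hcb : φ (ω.symm b) with ⟨jb, cb⟩
      have hja : ja = j' := by rw [hca] at ha; exact ha.2
      have hjb : jb = j' := by rw [hcb] at hb; exact hb.2
      subst hja; subst hjb
      rw [hca, hcb] at h2
      simp only at h2
      rw [Fin.ext h2]
    have := φ.injective h3
    exact ω.symm.injective this

lemma wd_fits (r1 : E → E → Prop)
    (hpic2 : ∀ a b, r1 a b → cellRel2 ν (φ a) (φ b)) :
    Fits r1 ω (fun i => (wd ν ω φ i).rev) := by
  constructor
  · intro e e' hr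
    simp only
    rw [Fin.rev_le_rev]
    rcases hpic2 e e' hr with h | ⟨h1, _⟩
    · rw [Fin.le_def]
      simp only [wd, Equiv.symm_apply_apply]
      omega
    · rw [Fin.le_def]
      simp only [wd, Equiv.symm_apply_apply]
      omega
  · intro e e' hr hno
    simp only
    rw [Fin.rev_lt_rev]
    rcases hpic2 e e' hr with h | ⟨h1, h2⟩
    · rw [Fin.lt_def]
      simp only [wd, Equiv.symm_apply_apply]
      omega
    · exfalso
      apply hno
      have : φ e ≠ φ e' := by
        intro hh
        rw [hh] at h2
        omega
      have := hpic1 (φ e) (φ e') ⟨⟨le_of_eq (congrArg Fin.val h1), le_of_lt h2⟩, this⟩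
      simpa using this

end Forward


lemma sigma_mk_eq {ν : Fin k → ℕ} (c : Σ j : Fin k, Fin (ν j)) (x : Fin k) (y : ℕ)
    (hx : x = c.1) (hy : y = (c.2 : ℕ)) (hlt : y < ν x) :
    (⟨x, ⟨y, hlt⟩⟩ : Σ j : Fin k, Fin (ν j)) = c := by
  subst hx; subst hy
  rcases c with ⟨j, c2⟩
  simp

end LR

/-- Extended Littlewood–Richardson rule: the number of pictures from a special
double poset `π` (of cardinality `n`, with first order `r1` and labelling `ω`)
to `π_ν` equals the number of lattice permutations of weight `ν` whose
complements fit into `π`. -/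
theorem littlewood_richardson_for_special_double_posets
    {E : Type} [Fintype E] {n k : ℕ}
    (r1 : E → E → Prop) (ω : E ≃ Fin n) (h1 : IsStrictOrder E r1)
    (ν : Fin k → ℕ)
    (hanti : ∀ i j : Fin k, i ≤ j → ν j ≤ ν i) (hpos : ∀ i, 0 < ν i)
    (hsum : ∑ i, ν i = n) :
    Nat.card {φ : E ≃ Σ j : Fin k, Fin (ν j) //
        (∀ a b, r1 a b → cellRel2 ν (φ a) (φ b)) ∧
        (∀ c c', cellRel1 ν c c' → ω (φ.symm c) < ω (φ.symm c'))} =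
    Nat.card {w : Fin n → Fin k //
        (∀ (m : ℕ) (j j' : Fin k), (j' : ℕ) = (j : ℕ) + 1 →
          (Finset.univ.filter fun i : Fin n => (i : ℕ) < m ∧ w i = j').card ≤
            (Finset.univ.filter fun i : Fin n => (i : ℕ) < m ∧ w i = j).card) ∧
        (∀ j, (Finset.univ.filter fun i => w i = j).card = ν j) ∧
        Fits r1 ω (fun i => (w i).rev)} := by
  apply Nat.card_congr
  refine
    { toFun := fun p => ⟨LR.wd ν ω p.1,
        fun m j j' hjj => LR.wd_lattice ν ω p.1 p.2.2 hanti m j j' hjj,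
        fun j => LR.wd_weight ν ω p.1 p.2.2 j,
        LR.wd_fits ν ω p.1 p.2.2 r1 p.2.1⟩,
      invFun := fun q =>
        ⟨Equiv.ofBijective (LR.toCell ν ω q.1 q.2.2.1)
            (LR.toCell_bijective ν ω q.1 q.2.2.1 hsum),
          fun a b hab => LR.toCell_rel2 ν ω q.1 q.2.2.1 r1 q.2.2.2 a b hab,
          fun c c' hcc => by
            refine LR.toCell_rel1 ν ω q.1 q.2.2.1 hsum q.2.1 c c' hcc ?_ ?_
            · exact Equiv.apply_symm_apply
                (Equiv.ofBijective _ (LR.toCell_bijective ν ω q.1 q.2.2.1 hsum)) c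
            · exact Equiv.apply_symm_apply
                (Equiv.ofBijective _ (LR.toCell_bijective ν ω q.1 q.2.2.1 hsum)) c'⟩,
      left_inv := ?_, right_inv := ?_ }
  · intro p
    apply Subtype.ext
    apply Equiv.ext
    intro e
    show LR.toCell ν ω (LR.wd ν ω p.1) (fun j => LR.wd_weight ν ω p.1 p.2.2 j) e = p.1 e
    apply LR.sigma_mk_eq
    · show (p.1 (ω.symm (ω e))).1 = (p.1 e).1
      rw [Equiv.symm_apply_apply]
    · exact LR.wd_colcnt ν ω p.1 p.2.2 e
  · intro q
    apply Subtype.ext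
    funext i
    show (LR.toCell ν ω q.1 q.2.2.1 (ω.symm i)).1 = q.1 i
    simp [LR.toCell]
end
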